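/- arXiv:2111.13115 — 6 statements merged into one kernel-verified Lean document; each statement's English description precedes it below -/
import Mathlib

section
/- Every finite undirected graph G contains every tree on χ(G) vertices as a subgraph, where χ(G) is the chromatic number of G. -/
open Finset in
lemma aux_minDeg {V : Type*} [DecidableEq V] (G : SimpleGraph V) [DecidableRel G.Adj] (m : ℕ) :
    ∀ n (S : Finset V), S.card ≤ n →
    (¬ ∃ c : V → ℕ, (∀ v ∈ S, c v < m) ∧ ∀ a ∈ S, ∀ b ∈ S, G.Adj a b → c a ≠ c b) →
    ∃ S' : Finset V, S'.Nonempty ∧ ∀ v ∈ S', m ≤ (S'.filter (G.Adj v)).card := by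
  intro n
  induction n with
  | zero =>
    intro S hS hnc
    exfalso
    rw [Nat.le_zero, Finset.card_eq_zero] at hS
    subst hS
    exact hnc ⟨fun _ => 0, by simp, by simp⟩
  | succ n ih =>
    intro S hS hnc
    by_cases hall : ∀ v ∈ S, m ≤ (S.filter (G.Adj v)).card
    · refine ⟨S, ?_, hall⟩
      rcases S.eq_empty_or_nonempty with rfl | h
      · exact absurd ⟨fun _ => 0, by simp, by simp⟩ hnc
      · exact h
    · push_neg at hall
      obtain ⟨v, hv, hdeg⟩ := hall
      refine ih (S.erase v) ?_ ?_
      · have := Finset.card_erase_of_mem hv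
        omega
      · rintro ⟨c, hc1, hc2⟩
        -- extend the coloring to v
        set N : Finset ℕ := (S.filter (G.Adj v)).image c with hN
        have hNcard : N.card < m := lt_of_le_of_lt (Finset.card_image_le) hdeg
        have hNsub : N ⊆ Finset.range m := by
          intro x hx
          simp only [hN, Finset.mem_image, Finset.mem_filter] at hx
          obtain ⟨b, ⟨hbS, hba⟩, rfl⟩ := hx
          have hbv : b ≠ v := fun h => G.irrefl (h ▸ hba)
          exact Finset.mem_range.mpr (hc1 b (Finset.mem_erase.mpr ⟨hbv, hbS⟩))
        have : (Finset.range m \ N).Nonempty := by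
          apply Finset.card_pos.mp
          rw [Finset.card_sdiff_of_subset hNsub, Finset.card_range]
          omega
        obtain ⟨j, hj⟩ := this
        rw [Finset.mem_sdiff, Finset.mem_range] at hj
        apply hnc
        refine ⟨Function.update c v j, ?_, ?_⟩
        · intro w hw
          by_cases hwv : w = v
          · subst hwv; rw [Function.update_self]; exact hj.1
          · rw [Function.update_of_ne hwv]
            exact hc1 w (Finset.mem_erase.mpr ⟨hwv, hw⟩)
        · intro a ha b hb hab
          have hanb : a ≠ b := G.ne_of_adj hab
          by_cases hav : a = v
          · subst hav
            rw [Function.update_self, Function.update_of_ne (Ne.symm hanb)]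
            intro h
            exact hj.2 (by
              simp only [hN, Finset.mem_image]
              exact ⟨b, Finset.mem_filter.mpr ⟨hb, hab⟩, h.symm⟩)
          · by_cases hbv : b = v
            · subst hbv
              rw [Function.update_self, Function.update_of_ne hav]
              intro h
              exact hj.2 (by
                simp only [hN, Finset.mem_image]
                exact ⟨a, Finset.mem_filter.mpr ⟨ha, hab.symm⟩, h⟩)
            · rw [Function.update_of_ne hav, Function.update_of_ne hbv]
              exact hc2 a (Finset.mem_erase.mpr ⟨hav, ha⟩) b (Finset.mem_erase.mpr ⟨hbv, hb⟩) hab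


open SimpleGraph Walk in
lemma tree_struct {k : ℕ} (T : SimpleGraph (Fin k)) (hT : T.IsTree) :
    ∃ (rank : Fin k → ℕ) (par : Fin k → Fin k) (r : Fin k),
      rank r = 0 ∧
      (∀ v, v ≠ r → T.Adj v (par v) ∧ rank v = rank (par v) + 1) ∧
      (∀ a b, T.Adj a b →
        (par a = b ∧ rank a = rank b + 1) ∨ (par b = a ∧ rank b = rank a + 1)) := by
  have hne : Nonempty (Fin k) := hT.isConnected.nonempty
  obtain ⟨r⟩ := hne
  have hup := hT.existsUnique_path
  have h2 : ∀ v, ∃ p : T.Walk v r, p.IsPath ∧ ∀ q : T.Walk v r, q.IsPath → q = p :=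
    fun v => ⟨(hup v r).choose, (hup v r).choose_spec.1, fun q hq => (hup v r).choose_spec.2 q hq⟩
  choose P hP hPu using h2
  have hPr : P r = Walk.nil := (hPu r Walk.nil IsPath.nil).symm
  refine ⟨fun v => (P v).length, fun v => (P v).getVert 1, r, by simp [hPr], ?_, ?_⟩
  · intro v hv
    show T.Adj v ((P v).getVert 1) ∧ (P v).length = (P ((P v).getVert 1)).length + 1
    have hnil : ¬ (P v).Nil := Walk.not_nil_of_ne hv
    have hadj : T.Adj v ((P v).getVert 1) := (P v).adj_snd hnil
    have htail : (P v).tail = P ((P v).getVert 1) :=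
      hPu _ _ ((hP v).tail)
    have hlen : (P v).tail.length + 1 = (P v).length := Walk.length_tail_add_one hnil
    exact ⟨hadj, by rw [← hlen, htail]⟩
  · intro a b hab
    by_cases hb : b ∈ (P a).support
    · left
      set P₂ := (P a).dropUntil b hb with hP₂
      have hP₂path : P₂.IsPath := (hP a).dropUntil hb
      have hanotin : a ∉ P₂.support := by
        have hnd : (P a).support.Nodup := (hP a).support_nodup
        have hspec := (P a).take_spec hb
        have hsupp : (P a).support = ((P a).takeUntil b hb).support ++ P₂.support.tail := by
          have h3 := Walk.support_append ((P a).takeUntil b hb) ((P a).dropUntil b hb)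
          rw [hspec] at h3
          exact h3
        rw [hsupp] at hnd
        have hamem : a ∈ ((P a).takeUntil b hb).support := Walk.start_mem_support _
        have hnotintail : a ∉ P₂.support.tail :=
          fun h => (List.disjoint_of_nodup_append hnd) hamem h
        intro hmem
        rw [Walk.support_eq_cons] at hmem
        rcases List.mem_cons.mp hmem with h | h
        · exact (T.ne_of_adj hab) h
        · exact hnotintail h
      have hQpath : (P₂.cons hab).IsPath := hP₂path.cons hanotin
      have hQ : P₂.cons hab = P a := hPu a _ hQpath
      have hP₂b : P₂ = P b := hPu b _ hP₂path
      constructor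
      · show (P a).getVert 1 = b
        rw [← hQ]
        simp [Walk.getVert_cons_succ, Walk.getVert_zero]
      · show (P a).length = (P b).length + 1
        rw [← hQ, ← hP₂b]
        simp
    · right
      have hQpath : ((P a).cons hab.symm).IsPath := (hP a).cons hb
      have hQ : (P a).cons hab.symm = P b := hPu b _ hQpath
      constructor
      · show (P b).getVert 1 = a
        rw [← hQ]
        simp [Walk.getVert_cons_succ, Walk.getVert_zero]
      · show (P b).length = (P a).length + 1
        rw [← hQ]
        simp


lemma embed_lemma {k : ℕ} (T : SimpleGraph (Fin k)) (hk0 : 0 < k)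
    (rank : Fin k → ℕ) (par : Fin k → Fin k) (r : Fin k)
    (hr : rank r = 0)
    (hpar : ∀ v, v ≠ r → T.Adj v (par v) ∧ rank v = rank (par v) + 1)
    (hkey : ∀ a b, T.Adj a b →
      (par a = b ∧ rank a = rank b + 1) ∨ (par b = a ∧ rank b = rank a + 1))
    {V : Type*} [DecidableEq V] (G : SimpleGraph V) [DecidableRel G.Adj]
    (S : Finset V) (hS : S.Nonempty) (hdeg : ∀ v ∈ S, k - 1 ≤ (S.filter (G.Adj v)).card) :
    ∃ f : Fin k → V, Function.Injective f ∧ ∀ a b, T.Adj a b → G.Adj (f a) (f b) := by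
  classical
  obtain ⟨v₀, hv₀⟩ := hS
  -- |S| ≥ k
  have hScard : k ≤ S.card := by
    have h1 : (S.filter (G.Adj v₀)).card ≤ (S.erase v₀).card := by
      apply Finset.card_le_card
      intro x hx
      rw [Finset.mem_filter] at hx
      exact Finset.mem_erase.mpr ⟨(G.ne_of_adj hx.2).symm, hx.1⟩
    have h2 := hdeg v₀ hv₀
    have h3 := Finset.card_erase_of_mem hv₀
    have h4 : 1 ≤ S.card := Finset.card_pos.mpr ⟨v₀, hv₀⟩
    omega
  set σ : Equiv.Perm (Fin k) := Tuple.sort rank with hσ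
  have hmono : Monotone (rank ∘ σ) := Tuple.monotone_sort rank
  -- parent comes earlier in the sorted order
  have horder : ∀ i : Fin k, σ i ≠ r → σ.symm (par (σ i)) < i := by
    intro i hi
    by_contra hcon
    push_neg at hcon
    have h1 : rank (σ i) ≤ rank (σ (σ.symm (par (σ i)))) := hmono hcon
    rw [Equiv.apply_symm_apply] at h1
    have h2 := (hpar (σ i) hi).2
    omega
  have main : ∀ i : ℕ, i ≤ k → ∃ g : Fin k → V,
      (∀ j : Fin k, j.val < i → g j ∈ S) ∧
      (∀ j₁ j₂ : Fin k, j₁.val < i → j₂.val < i → j₁ ≠ j₂ → g j₁ ≠ g j₂) ∧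
      (∀ j : Fin k, j.val < i → σ j ≠ r → G.Adj (g (σ.symm (par (σ j)))) (g j)) := by
    intro i
    induction i with
    | zero => exact fun _ => ⟨fun _ => v₀, by omega, by omega, by omega⟩
    | succ i ih =>
      intro hik
      obtain ⟨g, hg1, hg2, hg3⟩ := ih (by omega)
      set ι : Fin k := ⟨i, hik⟩ with hι
      set used : Finset V := (Finset.univ.filter (fun j : Fin k => j.val < i)).image g
        with huseddef
      have husedcard : used.card ≤ i := by
        refine le_trans Finset.card_image_le ?_
        calc (Finset.univ.filter (fun j : Fin k => j.val < i)).card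
            ≤ (Finset.range i).card := Finset.card_le_card_of_injOn (fun j => j.val)
              (fun j hj => Finset.mem_range.mpr (Finset.mem_filter.mp hj).2)
              (fun _ _ _ _ h => Fin.ext h)
          _ = i := Finset.card_range i
      have hmemused : ∀ j : Fin k, j.val < i → g j ∈ used := by
        intro j hj
        exact Finset.mem_image.mpr ⟨j, Finset.mem_filter.mpr ⟨Finset.mem_univ _, hj⟩, rfl⟩
      -- find the new vertex x and the adjacency requirement
      have hx : ∃ x, x ∈ S ∧ x ∉ used ∧ (σ ι ≠ r → G.Adj (g (σ.symm (par (σ ι)))) x) := by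
        by_cases hroot : σ ι = r
        · have hne : (S \ used).Nonempty := by
            apply Finset.card_pos.mp
            have := Finset.le_card_sdiff used S
            omega
          obtain ⟨x, hxmem⟩ := hne
          rw [Finset.mem_sdiff] at hxmem
          exact ⟨x, hxmem.1, hxmem.2, fun h => absurd hroot h⟩
        · set jp : Fin k := σ.symm (par (σ ι)) with hjp
          have hjpi : jp.val < i := by
            have := horder ι hroot
            rw [Fin.lt_def] at this
            exact this
          set w : V := g jp with hw
          have hwS : w ∈ S := hg1 jp hjpi
          have hwused : w ∈ used := hmemused jp hjpi
          set nbrs : Finset V := S.filter (G.Adj w) with hnbrs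
          have hnbcard : k - 1 ≤ nbrs.card := hdeg w hwS
          have hwnb : w ∉ nbrs := by
            rw [hnbrs, Finset.mem_filter]
            exact fun h => G.irrefl h.2
          have hsub : nbrs ∩ used ⊆ used.erase w := by
            intro x hxm
            rw [Finset.mem_inter] at hxm
            exact Finset.mem_erase.mpr ⟨fun h => hwnb (h ▸ hxm.1), hxm.2⟩
          have hcard2 : (nbrs ∩ used).card ≤ i - 1 := by
            have := Finset.card_le_card hsub
            have := Finset.card_erase_of_mem hwused
            omega
          have hne : (nbrs \ used).Nonempty := by
            apply Finset.card_pos.mp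
            have hsplit := Finset.card_sdiff_add_card_inter nbrs used
            omega
          obtain ⟨x, hxmem⟩ := hne
          rw [Finset.mem_sdiff] at hxmem
          have hxnb := hxmem.1
          rw [hnbrs, Finset.mem_filter] at hxnb
          exact ⟨x, hxnb.1, hxmem.2, fun _ => hxnb.2⟩
      have hlt : ∀ j : Fin k, j.val < i + 1 → j ≠ ι → j.val < i := by
        intro j hj hji
        have : j.val ≠ i := fun h => hji (Fin.ext h)
        omega
      have hιval : ι.val = i := rfl
      have hne_of_lt : ∀ j : Fin k, j.val < i → j ≠ ι := by
        intro j hj h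
        rw [h] at hj
        exact absurd hιval (by omega)
      obtain ⟨x, hxS, hxused, hxadj⟩ := hx
      refine ⟨Function.update g ι x, ?_, ?_, ?_⟩
      · intro j hj
        by_cases hji : j = ι
        · subst hji; rw [Function.update_self]; exact hxS
        · rw [Function.update_of_ne hji]
          exact hg1 j (hlt j hj hji)
      · intro j₁ j₂ hj₁ hj₂ hne
        by_cases h1 : j₁ = ι
        · subst h1
          have h2 : j₂ ≠ ι := fun h => hne (h ▸ rfl)
          rw [Function.update_self, Function.update_of_ne h2]
          intro h
          exact hxused (h ▸ hmemused j₂ (hlt j₂ hj₂ h2))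
        · rw [Function.update_of_ne h1]
          by_cases h2 : j₂ = ι
          · subst h2
            rw [Function.update_self]
            intro h
            exact hxused (h ▸ hmemused j₁ (hlt j₁ hj₁ h1))
          · rw [Function.update_of_ne h2]
            exact hg2 j₁ j₂ (hlt j₁ hj₁ h1) (hlt j₂ hj₂ h2) hne
      · intro j hj hjr
        by_cases hji : j = ι
        · subst hji
          have hjpi : (σ.symm (par (σ ι))).val < i := by
            have := horder ι hjr
            rw [Fin.lt_def] at this
            exact this
          rw [Function.update_self,
            Function.update_of_ne (hne_of_lt _ hjpi)]
          exact hxadj hjr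
        · have hji' := hlt j hj hji
          have hjpi : (σ.symm (par (σ j))).val < i := by
            have := horder j hjr
            rw [Fin.lt_def] at this
            omega
          rw [Function.update_of_ne hji, Function.update_of_ne (hne_of_lt _ hjpi)]
          exact hg3 j hji' hjr
  obtain ⟨g, hg1, hg2, hg3⟩ := main k le_rfl
  refine ⟨fun v => g (σ.symm v), ?_, ?_⟩
  · intro a b hab
    by_contra hne
    exact hg2 (σ.symm a) (σ.symm b) (σ.symm a).isLt (σ.symm b).isLt
      (fun h => hne (by simpa using congrArg σ h)) hab
  · intro a b hab
    rcases hkey a b hab with ⟨hpa, hra⟩ | ⟨hpb, hrb⟩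
    · have har : a ≠ r := by
        intro h
        rw [h, hr] at hra
        omega
      have := hg3 (σ.symm a) (σ.symm a).isLt (by rwa [Equiv.apply_symm_apply])
      rw [Equiv.apply_symm_apply, hpa] at this
      exact this.symm
    · have hbr : b ≠ r := by
        intro h
        rw [h, hr] at hrb
        omega
      have := hg3 (σ.symm b) (σ.symm b).isLt (by rwa [Equiv.apply_symm_apply])
      rw [Equiv.apply_symm_apply, hpb] at this
      exact this

/-- Every finite graph `G` contains every tree on `χ(G)` vertices as a subgraph. -/
theorem stmt3 {V : Type*} [Fintype V] (G : SimpleGraph V) (k : ℕ)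
    (hk : (k : ℕ∞) = G.chromaticNumber)
    (T : SimpleGraph (Fin k)) (hT : T.IsTree) :
    ∃ f : Fin k → V, Function.Injective f ∧ ∀ a b, T.Adj a b → G.Adj (f a) (f b) := by
  classical
  have hk0 : 0 < k := Fin.pos_iff_nonempty.mpr hT.isConnected.nonempty
  have hnc : ¬ G.Colorable (k - 1) := by
    intro hc
    have h1 := hc.chromaticNumber_le
    rw [← hk, Nat.cast_le] at h1
    omega
  have hnc' : ¬ ∃ c : V → ℕ, (∀ v ∈ (Finset.univ : Finset V), c v < k - 1) ∧
      ∀ a ∈ (Finset.univ : Finset V), ∀ b ∈ (Finset.univ : Finset V),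
        G.Adj a b → c a ≠ c b := by
    rintro ⟨c, h1, h2⟩
    refine hnc ⟨SimpleGraph.Coloring.mk (fun v => ⟨c v, h1 v (Finset.mem_univ v)⟩) ?_⟩
    intro a b hab h
    exact h2 a (Finset.mem_univ a) b (Finset.mem_univ b) hab
      (by simpa using congrArg Fin.val h)
  obtain ⟨S, hS, hdeg⟩ := aux_minDeg G (k - 1) Finset.univ.card Finset.univ le_rfl hnc'
  obtain ⟨rank, par, r, hr, hpar, hkey⟩ := tree_struct T hT
  exact embed_lemma T hk0 rank par r hr hpar hkey G S hS hdeg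
end

section
/- Let k > 2 be an integer and let G be a finite undirected graph such that every subgraph of G has average degree at most k. Then either G contains a clique on k+1 vertices, or the chromatic number of G is at most k. -/
open Finset

universe u
variable {V : Type u}

/-- proper on a set -/
def propOn (G : SimpleGraph V) {k : ℕ} (A : Set V) (c : V → Fin k) : Prop :=
  ∀ u w, u ∈ A → w ∈ A → G.Adj u w → c u ≠ c w

/-- degeneracy-type greedy coloring lemma -/
lemma lemA [Fintype V] (G : SimpleGraph V) (k : ℕ) (hk : 0 < k)
    (h : ∀ s : Finset V, s.Nonempty → ∃ v ∈ s,
      ∀ t : Finset V, (∀ x ∈ t, x ∈ s ∧ x ≠ v ∧ G.Adj v x) → t.card < k) :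
    ∃ c : V → Fin k, ∀ u w, G.Adj u w → c u ≠ c w := by
  classical
  suffices H : ∀ s : Finset V, ∃ c : V → Fin k, ∀ u ∈ s, ∀ w ∈ s, G.Adj u w → c u ≠ c w by
    obtain ⟨c, hc⟩ := H Finset.univ
    exact ⟨c, fun u w hw => hc u (mem_univ _) w (mem_univ _) hw⟩
  intro s
  induction s using Finset.strongInduction with
  | _ s IH =>
    rcases s.eq_empty_or_nonempty with rfl | hne
    · exact ⟨fun _ => ⟨0, hk⟩, by simp⟩
    obtain ⟨v, hv, hvdeg⟩ := h s hne
    obtain ⟨c, hc⟩ := IH (s.erase v) (erase_ssubset hv)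
    set t : Finset V := (s.erase v).filter (fun x => G.Adj v x) with ht
    have htc : t.card < k := by
      apply hvdeg
      intro x hx
      simp only [ht, mem_filter, mem_erase] at hx
      exact ⟨hx.1.2, hx.1.1, hx.2⟩
    have himg : (t.image c).card < k := lt_of_le_of_lt card_image_le htc
    have : (Finset.univ \ t.image c).Nonempty := by
      rw [sdiff_nonempty]
      intro hsub
      have := card_le_card hsub
      simp only [card_univ, Fintype.card_fin] at this
      omega
    obtain ⟨col, hcol⟩ := this
    rw [mem_sdiff] at hcol
    refine ⟨Function.update c v col, ?_⟩
    intro u hu w hw hadj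
    have hne' : u ≠ w := G.ne_of_adj hadj
    by_cases huv : u = v
    · subst huv
      rw [Function.update_self, Function.update_of_ne (Ne.symm hne')]
      intro hEq
      apply hcol.2
      rw [hEq]
      exact mem_image_of_mem c (by simp [ht, mem_erase, Ne.symm hne', hw, hadj])
    · by_cases hwv : w = v
      · subst hwv
        rw [Function.update_self, Function.update_of_ne huv]
        intro hEq
        apply hcol.2
        rw [← hEq]
        exact mem_image_of_mem c (by simp [ht, mem_erase, huv, hu, hadj.symm])
      · rw [Function.update_of_ne huv, Function.update_of_ne hwv]
        exact hc u (mem_erase.2 ⟨huv, hu⟩) w (mem_erase.2 ⟨hwv, hw⟩) hadj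

/-- merge two colorings that agree on the overlap, when every edge lies in one side -/
lemma merge2 (G : SimpleGraph V) {k : ℕ} (C D : Set V)
    (hU : ∀ x, x ∈ C ∨ x ∈ D)
    (hsep : ∀ u w, G.Adj u w → (u ∈ C ∧ w ∈ C) ∨ (u ∈ D ∧ w ∈ D))
    (c1 c2 : V → Fin k) (h1 : propOn G C c1) (h2 : propOn G D c2)
    (hagree : ∀ x, x ∈ C → x ∈ D → c1 x = c2 x) :
    ∃ c : V → Fin k, ∀ u w, G.Adj u w → c u ≠ c w := by
  classical
  refine ⟨fun v => if v ∈ C then c1 v else c2 v, ?_⟩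
  intro u w hadj
  have key : ∀ x, x ∈ D → (if x ∈ C then c1 x else c2 x) = c2 x := by
    intro x hx
    split_ifs with h
    · exact hagree x h hx
    · rfl
  simp only []
  rcases hsep u w hadj with ⟨hu, hw⟩ | ⟨hu, hw⟩
  · simp only [if_pos hu, if_pos hw]
    exact h1 u w hu hw hadj
  · rw [show (if u ∈ C then c1 u else c2 u) = c2 u from key u hu,
        show (if w ∈ C then c1 w else c2 w) = c2 w from key w hw]
    exact h2 u w hu hw hadj

/-- closed sets absorb reachability -/
lemma reachClosed (G : SimpleGraph V) (P : V → Prop)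
    (hcl : ∀ x y, G.Adj x y → P x → P y) {u w : V} (h : G.Reachable u w) (hu : P u) : P w := by
  obtain ⟨p⟩ := h
  induction p with
  | nil => exact hu
  | cons h' p ih => exact ih (hcl _ _ h' hu)

/-- step towards v along a shortest path -/
lemma exists_adj_dist_lt (G : SimpleGraph V) {u v : V} (h : G.Reachable u v) (hne : u ≠ v) :
    ∃ w, G.Adj u w ∧ G.dist w v < G.dist u v := by
  obtain ⟨p, hp⟩ := h.exists_walk_length_eq_dist
  cases p with
  | nil => exact absurd rfl hne
  | cons hadj q =>
    refine ⟨_, hadj, ?_⟩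
    have h1 : G.dist _ v ≤ q.length := SimpleGraph.dist_le q
    simp only [SimpleGraph.Walk.length_cons] at hp
    omega

/-- transfer cliquefreeness along maps reflecting adjacency -/
lemma cliquefree_transfer {W : Type*} {G : SimpleGraph V} {H : SimpleGraph W} (f : W → V)
    (hf : Function.Injective f) (hadj : ∀ x y, H.Adj x y → G.Adj (f x) (f y))
    {m : ℕ} (hG : G.CliqueFree m) : H.CliqueFree m := by
  classical
  intro t ht
  apply hG (t.image f)
  constructor
  · intro x hx y hy hxy
    simp only [coe_image, Set.mem_image] at hx hy
    obtain ⟨x', hx', rfl⟩ := hx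
    obtain ⟨y', hy', rfl⟩ := hy
    have : x' ≠ y' := fun h => hxy (by rw [h])
    exact hadj _ _ (ht.1 hx' hy' this)
  · rw [card_image_of_injective _ hf]
    exact ht.2


/-- extend a coloring over a low-degree vertex -/
lemma extendLow [Fintype V] (G : SimpleGraph V) (k : ℕ) (hk : 0 < k) (v : V)
    (hdegv : ∀ t : Finset V, (∀ x ∈ t, G.Adj v x) → t.card < k)
    (c' : {x : V // x ≠ v} → Fin k)
    (hc' : ∀ u w : {x : V // x ≠ v}, G.Adj u w → c' u ≠ c' w) :
    ∃ c : V → Fin k, ∀ u w, G.Adj u w → c u ≠ c w := by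
  classical
  set N : Finset V := univ.filter (fun x => G.Adj v x) with hN
  have hNcard : N.card < k := hdegv N (by simp [hN])
  set c₀ : V → Fin k := fun x => if h : x = v then ⟨0, hk⟩ else c' ⟨x, h⟩ with hc₀
  have himg : (N.image c₀).card < k := lt_of_le_of_lt card_image_le hNcard
  have hfresh : (Finset.univ \ N.image c₀).Nonempty := by
    rw [sdiff_nonempty]
    intro hsub
    have := card_le_card hsub
    simp only [card_univ, Fintype.card_fin] at this
    omega
  obtain ⟨col, hcol⟩ := hfresh
  rw [mem_sdiff] at hcol
  refine ⟨fun x => if x = v then col else c₀ x, ?_⟩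
  intro u w hadj
  show (if u = v then col else c₀ u) ≠ (if w = v then col else c₀ w)
  have hne := G.ne_of_adj hadj
  by_cases hu : u = v
  · subst hu
    rw [if_pos rfl, if_neg (Ne.symm hne)]
    intro hEq
    exact hcol.2 (hEq ▸ mem_image_of_mem c₀ (by simp [hN, hadj]))
  · by_cases hw : w = v
    · subst hw
      rw [if_pos rfl, if_neg hu]
      intro hEq
      exact hcol.2 (hEq ▸ mem_image_of_mem c₀ (by simp [hN, hadj.symm]))
    · rw [if_neg hu, if_neg hw]
      simp only [hc₀, dif_neg hu, dif_neg hw]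
      exact hc' ⟨u, hu⟩ ⟨w, hw⟩ hadj

/-- the merge graph: identify `b` onto `a` -/
def mgr (G : SimpleGraph V) (a b : V) (P : V → Prop) : SimpleGraph {x : V // P x} where
  Adj x y := x ≠ y ∧ (G.Adj x y ∨ (x.val = a ∧ G.Adj b y) ∨ (y.val = a ∧ G.Adj b x))
  symm := by
    constructor
    rintro x y ⟨hne, h⟩
    exact ⟨hne.symm, by tauto⟩
  loopless := by constructor; rintro x ⟨hne, _⟩; exact hne rfl

lemma mgr_adj {G : SimpleGraph V} {a b : V} {P : V → Prop} {x y : {x : V // P x}} :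
    (mgr G a b P).Adj x y ↔ x ≠ y ∧ (G.Adj x y ∨ (x.val = a ∧ G.Adj b y) ∨ (y.val = a ∧ G.Adj b x)) :=
  Iff.rfl

/-- neighbors of `u` (with `u.val ≠ b`) in the merge graph inject into `G`-neighbors of `u` -/
lemma mgr_nbr_inj [Fintype V] (G : SimpleGraph V) (a b : V) (P : V → Prop)
    (hb : ∀ x : {x : V // P x}, x.val ≠ b) {u : {x : V // P x}} (hu : u.val ≠ a)
    (t : Finset {x : V // P x}) (ht : ∀ x ∈ t, (mgr G a b P).Adj u x) :
    ∃ f : {x : V // P x} → V, Set.InjOn f t ∧ (∀ x ∈ t, G.Adj u.val (f x)) ∧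
      (∀ x, f x = x.val ∨ f x = b) := by
  classical
  refine ⟨fun y => if y.val = a ∧ ¬ G.Adj u.val a then b else y.val, ?_, ?_, ?_⟩
  · intro y1 h1 y2 h2 heq
    simp only at heq
    split_ifs at heq with p1 p2 p2
    · exact Subtype.ext (p1.1.trans p2.1.symm)
    · exact absurd heq.symm (hb y2)
    · exact absurd heq (hb y1)
    · exact Subtype.ext heq
  · intro x hx
    have hadj := ht x hx
    rw [mgr_adj] at hadj
    simp only
    split_ifs with p
    · rcases hadj.2 with h | ⟨h, _⟩ | ⟨h, hba⟩
      · exact absurd (p.1 ▸ h) p.2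
      · exact absurd (h ▸ hu) (fun q => q rfl)
      · exact hba.symm
    · rcases hadj.2 with h | ⟨h, _⟩ | ⟨h, hba⟩
      · exact h
      · exact absurd (h ▸ hu) (fun q => q rfl)
      · push_neg at p
        have : G.Adj u.val a := p h
        rwa [← h] at this
  · intro x
    simp only
    split_ifs
    · exact Or.inr rfl
    · exact Or.inl rfl

lemma core3a [Fintype V] (G : SimpleGraph V) (k : ℕ) (hk : 3 ≤ k)
    (hdeg : ∀ x : V, ∀ t : Finset V, (∀ y ∈ t, G.Adj x y) → t.card ≤ k)
    (v a b : V) (hva : G.Adj v a) (hvb : G.Adj v b) (hab : ¬ G.Adj a b) (hane : a ≠ b)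
    (hreach : (G.comap (Subtype.val : {x : V // x ≠ a ∧ x ≠ b} → V)).Preconnected) :
    ∃ c : V → Fin k, ∀ u w, G.Adj u w → c u ≠ c w := by
  classical
  have hvna : v ≠ a := G.ne_of_adj hva
  have hvnb : v ≠ b := G.ne_of_adj hvb
  set G2 := G.comap (Subtype.val : {x : V // x ≠ a ∧ x ≠ b} → V) with hG2
  set v' : {x : V // x ≠ a ∧ x ≠ b} := ⟨v, hvna, hvnb⟩ with hv'
  set P : V → Prop := fun x => x ≠ b ∧ x ≠ v with hP
  set H3 := mgr G a b P with hH3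
  have hbP : ∀ x : {x : V // P x}, x.val ≠ b := fun x => x.prop.1
  set d : {x : V // P x} → ℕ := fun u =>
    if h : u.val ≠ a then G2.dist ⟨u.val, h, u.prop.1⟩ v' else 0 with hd
  -- lemA hypothesis for H3
  have hmain : ∀ s : Finset {x : V // P x}, s.Nonempty → ∃ u ∈ s,
      ∀ t : Finset {x : V // P x}, (∀ x ∈ t, x ∈ s ∧ x ≠ u ∧ H3.Adj u x) → t.card < k := by
    intro s hs
    by_cases hsa : ∀ x ∈ s, x.val = a
    · obtain ⟨u, hu⟩ := hs
      refine ⟨u, hu, fun t ht => ?_⟩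
      have : t = ∅ := by
        rw [eq_empty_iff_forall_notMem]
        intro x hx
        obtain ⟨hxs, hxu, _⟩ := ht x hx
        exact hxu (Subtype.ext ((hsa x hxs).trans (hsa u hu).symm))
      rw [this]; simp; omega
    · push_neg at hsa
      obtain ⟨x₀, hx₀s, hx₀a⟩ := hsa
      set s' := s.filter (fun x => x.val ≠ a) with hs'
      have hs'ne : s'.Nonempty := ⟨x₀, by simp [hs', hx₀s, hx₀a]⟩
      obtain ⟨u, hus', hmax⟩ := s'.exists_min_image d hs'ne
      rw [hs', mem_filter] at hus'
      obtain ⟨hus, hua⟩ := hus'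
      refine ⟨u, hus, fun t ht => ?_⟩
      have htadj : ∀ x ∈ t, H3.Adj u x := fun x hx => (ht x hx).2.2
      by_cases huv : G.Adj u.val v
      · -- all merged neighbors inject into N(u) \ {v}
        obtain ⟨f, finj, fadj, fval⟩ := mgr_nbr_inj G a b P hbP hua t htadj
        have hsub : ∀ x ∈ t.image f ∪ {v}, G.Adj u.val x := by
          intro x hx
          rw [mem_union, mem_image] at hx
          rcases hx with ⟨y, hy, rfl⟩ | hx
          · exact fadj y hy
          · rw [mem_singleton] at hx; subst hx; exact huv
        have hcard := hdeg u.val _ hsub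
        have hvni : v ∉ t.image f := by
          rw [mem_image]
          rintro ⟨y, hy, hfy⟩
          rcases fval y with h | h
          · exact y.prop.2 (by rw [← h, hfy])
          · exact hvnb (show v = b by rw [← hfy, h])
        rw [card_union_of_disjoint (by simpa using hvni), card_singleton] at hcard
        have himg : t.card = (t.image f).card := (card_image_of_injOn finj).symm
        omega
      · -- find a strictly-closer neighbor not in s
        have huP : u.val ≠ a ∧ u.val ≠ b := ⟨hua, u.prop.1⟩
        set u'' : {x : V // x ≠ a ∧ x ≠ b} := ⟨u.val, huP⟩ with hu''
        have hne'' : u'' ≠ v' := fun h => u.prop.2 (congrArg Subtype.val h)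
        obtain ⟨w', hw'adj, hw'lt⟩ := exists_adj_dist_lt G2 (hreach u'' v') hne''
        have hGuw : G.Adj u.val w'.val := hw'adj
        have hw'v : w'.val ≠ v := fun h => huv (h ▸ hGuw)
        set wU : {x : V // P x} := ⟨w'.val, w'.prop.2, hw'v⟩ with hwU
        have hwnt : wU ∉ t := by
          intro hmem
          obtain ⟨hws, _, _⟩ := ht wU hmem
          have hws' : wU ∈ s' := by
            rw [hs', mem_filter]
            exact ⟨hws, w'.prop.1⟩
          have := hmax wU hws'
          have hdw : d wU = G2.dist w' v' := by
            simp only [hd]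
            rw [dif_pos (show (wU : V) ≠ a from w'.prop.1)]
          have hdu : d u = G2.dist u'' v' := by
            simp only [hd]
            rw [dif_pos hua]
          rw [hdw, hdu] at this
          omega
        have hwadj : H3.Adj u wU := by
          rw [hH3, mgr_adj]
          exact ⟨fun h => (G.ne_of_adj hGuw) (congrArg Subtype.val h), Or.inl hGuw⟩
        obtain ⟨f, finj, fadj, fval⟩ := mgr_nbr_inj G a b P hbP hua (insert wU t)
          (by intro x hx
              rcases mem_insert.1 hx with rfl | hx
              · exact hwadj
              · exact htadj x hx)
        have hsub : ∀ x ∈ (insert wU t).image f, G.Adj u.val x := by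
          intro x hx
          rw [mem_image] at hx
          obtain ⟨y, hy, rfl⟩ := hx
          exact fadj y hy
        have hcard := hdeg u.val _ hsub
        have himg : (insert wU t).card = ((insert wU t).image f).card :=
          (card_image_of_injOn finj).symm
        rw [card_insert_of_notMem hwnt] at himg
        omega
  obtain ⟨cH, hcH⟩ := lemA H3 k (by omega) hmain
  have haP : P a := ⟨hane, fun h => hvna h.symm⟩
  set aE : {x : V // P x} := ⟨a, haP⟩ with haE
  set c₀ : V → Fin k := fun x => if h : P x then cH ⟨x, h⟩ else cH aE with hc₀
  set NB : Finset V := univ.filter (fun y => G.Adj v y) with hNB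
  have hNBk : NB.card ≤ k := hdeg v NB (by simp [hNB])
  have hbNB : b ∈ NB := by simp [hNB, hvb]
  set img : Finset (Fin k) := (NB.erase b).image c₀ with himg
  have himgk : img.card < k := by
    rw [himg]
    have h1 : (NB.erase b).card < NB.card := card_erase_lt_of_mem hbNB
    have := card_image_le (s := NB.erase b) (f := c₀)
    omega
  have hcover : ∀ y ∈ NB, c₀ y ∈ img := by
    intro y hy
    by_cases hyb : y = b
    · subst hyb
      have h1 : c₀ y = cH aE := by
        simp only [hc₀]
        rw [dif_neg (fun h : P y => h.1 rfl)]
      have h2 : c₀ a = cH aE := by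
        simp only [hc₀]
        rw [dif_pos haP]
      rw [h1, ← h2]
      exact mem_image_of_mem c₀ (mem_erase.2 ⟨hane, by simp [hNB, hva]⟩)
    · exact mem_image_of_mem c₀ (mem_erase.2 ⟨hyb, hy⟩)
  have hfresh : (Finset.univ \ img).Nonempty := by
    rw [sdiff_nonempty]
    intro hsub
    have := card_le_card hsub
    simp only [card_univ, Fintype.card_fin] at this
    omega
  obtain ⟨fresh, hfr⟩ := hfresh
  rw [mem_sdiff] at hfr
  have hProper : ∀ u w, G.Adj u w → u ≠ v → w ≠ v → c₀ u ≠ c₀ w := by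
    intro u w hadj hu hw
    by_cases hub : u = b
    · subst hub
      have hwb : w ≠ u := (G.ne_of_adj hadj).symm
      have hwa : w ≠ a := fun h => hab (h ▸ hadj).symm
      have hPw : P w := ⟨hwb, hw⟩
      have hH : H3.Adj ⟨w, hPw⟩ aE := by
        rw [hH3, mgr_adj]
        exact ⟨fun h => hwa (congrArg Subtype.val h), Or.inr (Or.inr ⟨rfl, hadj⟩)⟩
      have h1 : c₀ u = cH aE := by
        simp only [hc₀]
        rw [dif_neg (fun h : P u => h.1 rfl)]
      have h2 : c₀ w = cH ⟨w, hPw⟩ := by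
        simp only [hc₀]
        rw [dif_pos hPw]
      rw [h1, h2]
      exact fun h => (hcH _ _ hH) h.symm
    · by_cases hwb : w = b
      · subst hwb
        have hua : u ≠ a := fun h => hab (h ▸ hadj)
        have hPu : P u := ⟨hub, hu⟩
        have hH : H3.Adj ⟨u, hPu⟩ aE := by
          rw [hH3, mgr_adj]
          exact ⟨fun h => hua (congrArg Subtype.val h), Or.inr (Or.inr ⟨rfl, hadj.symm⟩)⟩
        have h1 : c₀ w = cH aE := by
          simp only [hc₀]
          rw [dif_neg (fun h : P w => h.1 rfl)]
        have h2 : c₀ u = cH ⟨u, hPu⟩ := by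
          simp only [hc₀]
          rw [dif_pos hPu]
        rw [h1, h2]
        exact hcH _ _ hH
      · have hPu : P u := ⟨hub, hu⟩
        have hPw : P w := ⟨hwb, hw⟩
        have hH : H3.Adj ⟨u, hPu⟩ ⟨w, hPw⟩ := by
          rw [hH3, mgr_adj]
          exact ⟨fun h => (G.ne_of_adj hadj) (congrArg Subtype.val h), Or.inl hadj⟩
        have h1 : c₀ u = cH ⟨u, hPu⟩ := by simp only [hc₀]; rw [dif_pos hPu]
        have h2 : c₀ w = cH ⟨w, hPw⟩ := by simp only [hc₀]; rw [dif_pos hPw]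
        rw [h1, h2]
        exact hcH _ _ hH
  refine ⟨fun x => if x = v then fresh else c₀ x, ?_⟩
  intro u w hadj
  show (if u = v then fresh else c₀ u) ≠ (if w = v then fresh else c₀ w)
  by_cases hu : u = v
  · subst hu
    have hw : w ≠ u := (G.ne_of_adj hadj).symm
    rw [if_pos rfl, if_neg hw]
    intro h
    exact hfr.2 (h ▸ hcover w (by simp [hNB, hadj]))
  · by_cases hw : w = v
    · subst hw
      rw [if_pos rfl, if_neg hu]
      intro h
      exact hfr.2 (h.symm ▸ hcover u (by simp [hNB, hadj.symm]))
    · rw [if_neg hu, if_neg hw]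
      exact hProper u w hadj hu hw

lemma core3b [Fintype V] (G : SimpleGraph V) (k n : ℕ) (hk : 3 ≤ k)
    (hdeg : ∀ x : V, ∀ t : Finset V, (∀ y ∈ t, G.Adj x y) → t.card ≤ k)
    (hcf : G.CliqueFree (k+1))
    (a b : V) (hane : a ≠ b) (hab : ¬ G.Adj a b)
    (S T : Set V)
    (hSa : a ∉ S) (hSb : b ∉ S) (hTa : a ∉ T) (hTb : b ∉ T)
    (hdisj : ∀ x, x ∈ S → x ∉ T)
    (haT : ∃ t ∈ T, G.Adj a t) (hbT : ∃ t ∈ T, G.Adj b t)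
    (hSne : S.Nonempty) (hTne : T.Nonempty)
    (hpureS : ¬ ∃ c : V → Fin k, propOn G (S ∪ {a, b}) c ∧ c a ≠ c b)
    (hpureT : ¬ ∃ c : V → Fin k, propOn G (T ∪ {a, b}) c ∧ c a = c b)
    (hn : Fintype.card V ≤ n + 1)
    (IH : ∀ (W : Type u) [Fintype W] (G' : SimpleGraph W), Fintype.card W ≤ n →
       (∀ x : W, ∀ t : Finset W, (∀ y ∈ t, G'.Adj x y) → t.card ≤ k) →
       G'.CliqueFree (k+1) → ∃ c : W → Fin k, ∀ u w, G'.Adj u w → c u ≠ c w) :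
    False := by
  classical
  obtain ⟨ta, htaT, htaAdj⟩ := haT
  obtain ⟨tb, htbT, htbAdj⟩ := hbT
  obtain ⟨s₀, hs₀⟩ := hSne
  obtain ⟨t₀, ht₀⟩ := hTne
  set PS : V → Prop := fun x => x ∈ S ∨ x = a ∨ x = b with hPS
  have hPSiff : ∀ x, x ∈ S ∪ {a, b} ↔ PS x := by
    intro x
    rw [hPS]
    simp only [Set.mem_union, Set.mem_insert_iff, Set.mem_singleton_iff]
  have hPSnT : ∀ x, PS x → x ∉ T := by
    rintro x (h | rfl | rfl)
    · exact hdisj _ h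
    · exact hTa
    · exact hTb
  set F : SimpleGraph {x : V // PS x} :=
    { Adj := fun x y => G.Adj x y ∨ (x.val = a ∧ y.val = b) ∨ (x.val = b ∧ y.val = a)
      symm := by
        constructor
        rintro x y (h | ⟨h1, h2⟩ | ⟨h1, h2⟩)
        · exact Or.inl h.symm
        · exact Or.inr (Or.inr ⟨h2, h1⟩)
        · exact Or.inr (Or.inl ⟨h2, h1⟩)
      loopless := by
        constructor
        rintro x (h | ⟨h1, h2⟩ | ⟨h1, h2⟩)
        · exact G.irrefl h
        · exact hane (h1 ▸ h2 ▸ rfl)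
        · exact hane (h2 ▸ h1 ▸ rfl) } with hF
  have hFadj : ∀ x y : {x : V // PS x},
      F.Adj x y ↔ (G.Adj x y ∨ (x.val = a ∧ y.val = b) ∨ (x.val = b ∧ y.val = a)) := by
    intro x y; rw [hF]
  have haPS : PS a := Or.inr (Or.inl rfl)
  have hbPS : PS b := Or.inr (Or.inr rfl)
  set aE : {x : V // PS x} := ⟨a, haPS⟩ with haE
  set bE : {x : V // PS x} := ⟨b, hbPS⟩ with hbE
  -- cardinality
  have hcardF : Fintype.card {x : V // PS x} ≤ n := by
    have : Fintype.card {x : V // PS x} < Fintype.card V := by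
      apply Fintype.card_lt_of_injective_of_notMem Subtype.val Subtype.val_injective
        (b := t₀)
      rintro ⟨y, rfl⟩
      exact hPSnT _ y.prop ht₀
    omega
  -- max degree of F
  have hdegF : ∀ x : {x : V // PS x}, ∀ t : Finset {x : V // PS x},
      (∀ y ∈ t, F.Adj x y) → t.card ≤ k := by
    intro x t ht
    by_cases hxa : x.val = a
    · set f : {x : V // PS x} → V := fun y => if y.val = b then ta else y.val with hf
      have hvals : ∀ y : {x : V // PS x}, y.val ≠ ta := fun y h =>
        hPSnT _ y.prop (h ▸ htaT)
      have hinj : Set.InjOn f t := by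
        intro y1 _ y2 _ heq
        simp only [hf] at heq
        split_ifs at heq with p1 p2 p2
        · exact Subtype.ext (p1.trans p2.symm)
        · exact absurd heq.symm (hvals y2)
        · exact absurd heq (hvals y1)
        · exact Subtype.ext heq
      have hadjf : ∀ y ∈ t, G.Adj x.val (f y) := by
        intro y hy
        have h := (hFadj x y).1 (ht y hy)
        simp only [hf]
        split_ifs with p
        · exact hxa ▸ htaAdj
        · rcases h with h | ⟨h1, h2⟩ | ⟨h1, h2⟩
          · exact h
          · exact absurd h2 p
          · exact absurd (hxa ▸ h1 : a = b) hane
      calc t.card = (t.image f).card := (card_image_of_injOn hinj).symm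
        _ ≤ k := hdeg x.val _ (by
            intro z hz
            obtain ⟨y, hy, rfl⟩ := mem_image.1 hz
            exact hadjf y hy)
    · by_cases hxb : x.val = b
      · set f : {x : V // PS x} → V := fun y => if y.val = a then tb else y.val with hf
        have hvals : ∀ y : {x : V // PS x}, y.val ≠ tb := fun y h =>
          hPSnT _ y.prop (h ▸ htbT)
        have hinj : Set.InjOn f t := by
          intro y1 _ y2 _ heq
          simp only [hf] at heq
          split_ifs at heq with p1 p2 p2
          · exact Subtype.ext (p1.trans p2.symm)
          · exact absurd heq.symm (hvals y2)
          · exact absurd heq (hvals y1)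
          · exact Subtype.ext heq
        have hadjf : ∀ y ∈ t, G.Adj x.val (f y) := by
          intro y hy
          have h := (hFadj x y).1 (ht y hy)
          simp only [hf]
          split_ifs with p
          · exact hxb ▸ htbAdj
          · rcases h with h | ⟨h1, h2⟩ | ⟨h1, h2⟩
            · exact h
            · exact absurd (hxb ▸ h1 : b = a) hane.symm
            · exact absurd h2 p
        calc t.card = (t.image f).card := (card_image_of_injOn hinj).symm
          _ ≤ k := hdeg x.val _ (by
              intro z hz
              obtain ⟨y, hy, rfl⟩ := mem_image.1 hz
              exact hadjf y hy)
      · have hGadj : ∀ y ∈ t, G.Adj x.val y.val := by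
          intro y hy
          rcases (hFadj x y).1 (ht y hy) with h | ⟨h1, _⟩ | ⟨h1, _⟩
          · exact h
          · exact absurd h1 hxa
          · exact absurd h1 hxb
        calc t.card = (t.image Subtype.val).card :=
              (card_image_of_injective _ Subtype.val_injective).symm
          _ ≤ k := hdeg x.val _ (by
              intro z hz
              obtain ⟨y, hy, rfl⟩ := mem_image.1 hz
              exact hGadj y hy)
  -- F is not k-colorable
  have hFnc : ¬ ∃ c : {x : V // PS x} → Fin k, ∀ u w, F.Adj u w → c u ≠ c w := by
    rintro ⟨cF, hcF⟩
    apply hpureS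
    refine ⟨fun x => if h : PS x then cF ⟨x, h⟩ else cF aE, ?_, ?_⟩
    · intro u w hu hw hadj
      rw [hPSiff] at hu hw
      show (if h : PS u then cF ⟨u, h⟩ else cF aE) ≠ (if h : PS w then cF ⟨w, h⟩ else cF aE)
      rw [dif_pos hu, dif_pos hw]
      exact hcF _ _ ((hFadj _ _).2 (Or.inl hadj))
    · show (if h : PS a then cF ⟨a, h⟩ else cF aE) ≠ (if h : PS b then cF ⟨b, h⟩ else cF aE)
      rw [dif_pos haPS, dif_pos hbPS]
      exact hcF aE bE ((hFadj _ _).2 (Or.inr (Or.inl ⟨rfl, rfl⟩)))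
  -- hence F has a (k+1)-clique
  have hFclique : ∃ tq : Finset {x : V // PS x}, F.IsNClique (k+1) tq := by
    by_contra hno
    push_neg at hno
    exact hFnc (IH _ F hcardF hdegF (fun tq htq => hno tq htq))
  obtain ⟨tq, htq⟩ := hFclique
  -- the clique contains both aE and bE
  have habE : aE ∈ tq ∧ bE ∈ tq := by
    by_contra hcon
    apply hcf (tq.image Subtype.val)
    constructor
    · rintro x hx y hy hxy
      simp only [coe_image, Set.mem_image, mem_coe] at hx hy
      obtain ⟨x', hx', rfl⟩ := hx
      obtain ⟨y', hy', rfl⟩ := hy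
      have hne' : x' ≠ y' := fun h => hxy (by rw [h])
      rcases (hFadj x' y').1 (htq.1 hx' hy' hne') with h | ⟨h1, h2⟩ | ⟨h1, h2⟩
      · exact h
      · exfalso
        refine hcon ⟨?_, ?_⟩
        · have hxe : x' = aE := Subtype.ext h1
          rwa [← hxe]
        · have hye : y' = bE := Subtype.ext h2
          rwa [← hye]
      · exfalso
        refine hcon ⟨?_, ?_⟩
        · have hye : y' = aE := Subtype.ext h2
          rwa [← hye]
        · have hxe : x' = bE := Subtype.ext h1
          rwa [← hxe]
    · rw [card_image_of_injective _ Subtype.val_injective]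
      exact htq.2
  obtain ⟨haEtq, hbEtq⟩ := habE
  set S' : Finset {x : V // PS x} := (tq.erase aE).erase bE with hS'
  have hS'card : S'.card = k - 1 := by
    rw [hS', card_erase_of_mem (mem_erase.2 ⟨fun h => hane (congrArg Subtype.val h).symm, hbEtq⟩),
      card_erase_of_mem haEtq, htq.2]
    omega
  have hS'prop : ∀ x ∈ S', x.val ∈ S ∧ G.Adj a x.val ∧ G.Adj b x.val := by
    intro x hx
    rw [hS', mem_erase, mem_erase] at hx
    obtain ⟨hxb, hxa, hxtq⟩ := hx
    have hxa' : x.val ≠ a := fun h => hxa (Subtype.ext h)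
    have hxb' : x.val ≠ b := fun h => hxb (Subtype.ext h)
    have hadja : G.Adj a x.val := by
      rcases (hFadj aE x).1 (htq.1 haEtq hxtq (fun h => hxa h.symm)) with h | ⟨_, h2⟩ | ⟨h1, _⟩
      · exact h
      · exact absurd h2 hxb'
      · exact absurd (h1 : a = b) hane
    have hadjb : G.Adj b x.val := by
      rcases (hFadj bE x).1 (htq.1 hbEtq hxtq (fun h => hxb h.symm)) with h | ⟨h1, _⟩ | ⟨_, h2⟩
      · exact h
      · exact absurd (h1 : b = a) hane.symm
      · exact absurd h2 hxa'
    refine ⟨?_, hadja, hadjb⟩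
    rcases x.prop with h | h | h
    · exact h
    · exact absurd h hxa'
    · exact absurd h hxb'
  -- a and b have at most one neighbor in T
  have hTnbr : ∀ z : V, z = a ∨ z = b → (∀ x ∈ S', G.Adj z x.val) →
      ∀ t : Finset V, (∀ y ∈ t, y ∈ T ∧ G.Adj z y) → t.card ≤ 1 := by
    intro z hz hzS' t htT
    have hdisjST : Disjoint (S'.image Subtype.val) t := by
      rw [disjoint_left]
      intro x hx hxt
      obtain ⟨y, hy, rfl⟩ := mem_image.1 hx
      exact hdisj _ (hS'prop y hy).1 (htT _ hxt).1
    have hsub : ∀ y ∈ S'.image Subtype.val ∪ t, G.Adj z y := by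
      intro y hy
      rcases mem_union.1 hy with hy | hy
      · obtain ⟨x, hx, rfl⟩ := mem_image.1 hy
        exact hzS' x hx
      · exact (htT y hy).2
    have hcard := hdeg z _ hsub
    rw [card_union_of_disjoint hdisjST, card_image_of_injective _ Subtype.val_injective,
      hS'card] at hcard
    omega
  have haT1 : ∀ t : Finset V, (∀ y ∈ t, y ∈ T ∧ G.Adj a y) → t.card ≤ 1 :=
    hTnbr a (Or.inl rfl) (fun x hx => (hS'prop x hx).2.1)
  have hbT1 : ∀ t : Finset V, (∀ y ∈ t, y ∈ T ∧ G.Adj b y) → t.card ≤ 1 :=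
    hTnbr b (Or.inr rfl) (fun x hx => (hS'prop x hx).2.2)
  set PT : V → Prop := fun x => x ∈ T ∨ x = a with hPT
  have haPT : PT a := Or.inr rfl
  set aH : {x : V // PT x} := ⟨a, haPT⟩ with haH
  have hbPT : ∀ y : {x : V // PT x}, y.val ≠ b := by
    rintro y h
    rcases y.prop with h2 | h2
    · exact hTb (h ▸ h2)
    · exact hane (h2.symm.trans h)
  set H := mgr G a b PT with hHdef
  -- cardinality of H
  have hcardH : Fintype.card {x : V // PT x} ≤ n := by
    have hbs₀ : b ≠ s₀ := fun h => hSb (h ▸ hs₀)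
    have hval : ∀ y : {x : V // PT x}, y.val ≠ s₀ := by
      rintro y rfl
      rcases y.prop with h2 | h2
      · exact hdisj _ hs₀ h2
      · exact hSa (h2 ▸ hs₀)
    have h1 : Fintype.card {x : V // PT x} < Fintype.card {x : V // x ≠ s₀} := by
      apply Fintype.card_lt_of_injective_of_notMem
        (fun y : {x : V // PT x} => (⟨y.val, hval y⟩ : {x : V // x ≠ s₀}))
        (fun y1 y2 h => Subtype.ext (congrArg (fun z : {x : V // x ≠ s₀} => z.val) h))
        (b := ⟨b, hbs₀⟩)
      rintro ⟨y, hy⟩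
      exact hbPT y (congrArg (fun z : {x : V // x ≠ s₀} => z.val) hy)
    have h2 : Fintype.card {x : V // x ≠ s₀} < Fintype.card V := by
      apply Fintype.card_lt_of_injective_of_notMem Subtype.val Subtype.val_injective
        (b := s₀)
      rintro ⟨y, hy⟩
      exact y.prop hy
    omega
  -- degree bound at the merged vertex
  have hnbrA : ∀ t : Finset {x : V // PT x}, (∀ y ∈ t, H.Adj aH y) → t.card ≤ 2 := by
    intro t ht
    have hsplit : ∀ y ∈ t, y.val ∈ T ∧ (G.Adj a y.val ∨ G.Adj b y.val) := by
      intro y hy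
      have h := ht y hy
      rw [hHdef, mgr_adj] at h
      obtain ⟨hne', hcl⟩ := h
      have hyT : y.val ∈ T := by
        rcases y.prop with h2 | h2
        · exact h2
        · exact absurd (Subtype.ext h2 : y = aH) (fun q => hne' q.symm)
      refine ⟨hyT, ?_⟩
      rcases hcl with h | ⟨h1, h2⟩ | ⟨h1, h2⟩
      · exact Or.inl h
      · exact Or.inr h2
      · exact absurd (Subtype.ext h1 : y = aH) (fun q => hne' q.symm)
    set t1 := t.filter (fun y => G.Adj a y.val) with ht1
    set t2 := t.filter (fun y => ¬ G.Adj a y.val) with ht2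
    have hcard1 : t1.card ≤ 1 := by
      have := haT1 (t1.image Subtype.val) (by
        intro z hz
        obtain ⟨y, hy, rfl⟩ := mem_image.1 hz
        rw [ht1, mem_filter] at hy
        exact ⟨(hsplit y hy.1).1, hy.2⟩)
      rwa [card_image_of_injective _ Subtype.val_injective] at this
    have hcard2 : t2.card ≤ 1 := by
      have := hbT1 (t2.image Subtype.val) (by
        intro z hz
        obtain ⟨y, hy, rfl⟩ := mem_image.1 hz
        rw [ht2, mem_filter] at hy
        exact ⟨(hsplit y hy.1).1, ((hsplit y hy.1).2).resolve_left hy.2⟩)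
      rwa [card_image_of_injective _ Subtype.val_injective] at this
    have : t1.card + t2.card = t.card := by
      rw [ht1, ht2]
      exact Finset.card_filter_add_card_filter_not
        (p := fun y : {x : V // PT x} => G.Adj a y.val)
    omega
  have hdegH : ∀ x : {x : V // PT x}, ∀ t : Finset {x : V // PT x},
      (∀ y ∈ t, H.Adj x y) → t.card ≤ k := by
    intro x t ht
    by_cases hxa : x.val = a
    · have hx : x = aH := Subtype.ext hxa
      have := hnbrA t (hx ▸ ht)
      omega
    · obtain ⟨f, finj, fadj, _⟩ := mgr_nbr_inj G a b PT hbPT hxa t ht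
      calc t.card = (t.image f).card := (card_image_of_injOn finj).symm
        _ ≤ k := hdeg x.val _ (by
            intro z hz
            obtain ⟨y, hy, rfl⟩ := mem_image.1 hz
            exact fadj y hy)
  -- H is clique-free
  have hcfH : H.CliqueFree (k+1) := by
    intro q hq
    by_cases haq : aH ∈ q
    · have := hnbrA (q.erase aH) (by
        intro y hy
        rw [mem_erase] at hy
        exact hq.1 haq (mem_coe.2 hy.2) (fun h => hy.1 h.symm))
      have hqcard := hq.2
      have := card_erase_of_mem haq
      omega
    · apply hcf (q.image Subtype.val)
      constructor
      · rintro x hx y hy hxy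
        simp only [coe_image, Set.mem_image, mem_coe] at hx hy
        obtain ⟨x', hx', rfl⟩ := hx
        obtain ⟨y', hy', rfl⟩ := hy
        have hne' : x' ≠ y' := fun h => hxy (by rw [h])
        have hadj := hq.1 hx' hy' hne'
        rw [hHdef, mgr_adj] at hadj
        rcases hadj.2 with h | ⟨h1, _⟩ | ⟨h1, _⟩
        · exact h
        · exact absurd hx' (by rw [show x' = aH from Subtype.ext h1]; exact haq)
        · exact absurd hy' (by rw [show y' = aH from Subtype.ext h1]; exact haq)
      · rw [card_image_of_injective _ Subtype.val_injective]
        exact hq.2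
  -- color H, contradict pure-≠ of the T side
  obtain ⟨cH, hcH⟩ := IH _ H hcardH hdegH hcfH
  apply hpureT
  have hmem : ∀ x, x ∈ T ∪ {a, b} → PT x ∨ x = b := by
    intro x hx
    rcases hx with hx | hx
    · exact Or.inl (Or.inl hx)
    · rcases hx with hx | hx
      · exact Or.inl (Or.inr hx)
      · exact Or.inr hx
  have hbnPT : ¬ PT b := by
    rintro (h | h)
    · exact hTb h
    · exact hane h.symm
  refine ⟨fun x => if h : PT x then cH ⟨x, h⟩ else cH aH, ?_, ?_⟩
  · intro u w hu hw hadj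
    show (if h : PT u then cH ⟨u, h⟩ else cH aH) ≠ (if h : PT w then cH ⟨w, h⟩ else cH aH)
    have hknown : ∀ z (hz : PT z), z ≠ b → G.Adj b z →
        cH ⟨z, hz⟩ ≠ cH aH := by
      intro z hz hzb hbz
      have hza : z ≠ a := fun h => hab (h ▸ hbz).symm
      have : H.Adj ⟨z, hz⟩ aH := by
        rw [hHdef, mgr_adj]
        exact ⟨fun h => hza (congrArg Subtype.val h), Or.inr (Or.inr ⟨rfl, hbz⟩)⟩
      exact hcH _ _ this
    by_cases hub : u = b
    · subst hub
      have hwb : w ≠ u := (G.ne_of_adj hadj).symm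
      have hPw : PT w := (hmem w hw).resolve_right hwb
      rw [dif_neg hbnPT, dif_pos hPw]
      exact fun h => hknown w hPw hwb hadj h.symm
    · by_cases hwb : w = b
      · subst hwb
        have hPu : PT u := (hmem u hu).resolve_right hub
        rw [dif_pos hPu, dif_neg hbnPT]
        exact hknown u hPu hub hadj.symm
      · have hPu : PT u := (hmem u hu).resolve_right hub
        have hPw : PT w := (hmem w hw).resolve_right hwb
        rw [dif_pos hPu, dif_pos hPw]
        have : H.Adj ⟨u, hPu⟩ ⟨w, hPw⟩ := by
          rw [hHdef, mgr_adj]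
          exact ⟨fun h => (G.ne_of_adj hadj) (congrArg Subtype.val h), Or.inl hadj⟩
        exact hcH _ _ this
  · show (if h : PT a then cH ⟨a, h⟩ else cH aH) = (if h : PT b then cH ⟨b, h⟩ else cH aH)
    rw [dif_pos haPT, dif_neg hbnPT]

lemma matchTwo {k : ℕ} (x1 y1 x2 y2 : Fin k) (h : (x1 = y1) ↔ (x2 = y2)) :
    ∃ σ : Equiv.Perm (Fin k), σ x2 = x1 ∧ σ y2 = y1 := by
  by_cases he : x1 = y1
  · have he2 : x2 = y2 := h.1 he
    refine ⟨Equiv.swap x2 x1, Equiv.swap_apply_left _ _, ?_⟩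
    rw [← he2, ← he]
    exact Equiv.swap_apply_left _ _
  · have he2 : x2 ≠ y2 := fun q => he (h.2 q)
    set y := Equiv.swap x2 x1 y2 with hy
    have hyx1 : y ≠ x1 := by
      rw [hy]
      intro q
      have hq : Equiv.swap x2 x1 y2 = Equiv.swap x2 x1 x2 := by
        rw [q, Equiv.swap_apply_left]
      exact he2 ((Equiv.swap x2 x1).injective hq).symm
    refine ⟨(Equiv.swap x2 x1).trans (Equiv.swap y y1), ?_, ?_⟩
    · show Equiv.swap y y1 (Equiv.swap x2 x1 x2) = x1
      rw [Equiv.swap_apply_left]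
      exact Equiv.swap_apply_of_ne_of_ne (Ne.symm hyx1) he
    · show Equiv.swap y y1 (Equiv.swap x2 x1 y2) = y1
      rw [← hy]
      exact Equiv.swap_apply_left _ _

/-- merge two side colorings matched on the (≤ 2 point) overlap -/
lemma mergeTwo (G : SimpleGraph V) {k : ℕ} (C D : Set V) (a b : V)
    (hU : ∀ x, x ∈ C ∨ x ∈ D)
    (hoverlap : ∀ x, x ∈ C → x ∈ D → x = a ∨ x = b)
    (hsep : ∀ u w, G.Adj u w → (u ∈ C ∧ w ∈ C) ∨ (u ∈ D ∧ w ∈ D))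
    (c1 c2 : V → Fin k) (h1 : propOn G C c1) (h2 : propOn G D c2)
    (hmatch : ∃ σ : Equiv.Perm (Fin k), σ (c2 a) = c1 a ∧ σ (c2 b) = c1 b) :
    ∃ c : V → Fin k, ∀ u w, G.Adj u w → c u ≠ c w := by
  obtain ⟨σ, hσa, hσb⟩ := hmatch
  apply merge2 G C D hU hsep c1 (σ ∘ c2) h1
  · intro u w hu hw hadj
    exact fun q => (h2 u w hu hw hadj) (σ.injective q)
  · intro x hxC hxD
    rcases hoverlap x hxC hxD with rfl | rfl
    · exact hσa.symm
    · exact hσb.symm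

/-- a proper coloring of an induced subgraph on a proper subset, from the IH -/
lemma sideColor [Fintype V] (G : SimpleGraph V) (k n : ℕ) (hk : 3 ≤ k)
    (hdeg : ∀ x : V, ∀ t : Finset V, (∀ y ∈ t, G.Adj x y) → t.card ≤ k)
    (hcf : G.CliqueFree (k+1))
    (A : Set V) (z : V) (hz : z ∉ A) (hn : Fintype.card V ≤ n + 1)
    (IH : ∀ (W : Type u) [Fintype W] (G' : SimpleGraph W), Fintype.card W ≤ n →
       (∀ x : W, ∀ t : Finset W, (∀ y ∈ t, G'.Adj x y) → t.card ≤ k) →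
       G'.CliqueFree (k+1) → ∃ c : W → Fin k, ∀ u w, G'.Adj u w → c u ≠ c w) :
    ∃ c : V → Fin k, propOn G A c := by
  classical
  set GA := G.comap (Subtype.val : {x : V // x ∈ A} → V) with hGA
  have hcard : Fintype.card {x : V // x ∈ A} ≤ n := by
    have : Fintype.card {x : V // x ∈ A} < Fintype.card V := by
      apply Fintype.card_lt_of_injective_of_notMem Subtype.val Subtype.val_injective (b := z)
      rintro ⟨y, rfl⟩
      exact hz y.prop
    omega
  have hdegA : ∀ x : {x : V // x ∈ A}, ∀ t : Finset {x : V // x ∈ A},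
      (∀ y ∈ t, GA.Adj x y) → t.card ≤ k := by
    intro x t ht
    calc t.card = (t.image Subtype.val).card :=
      (card_image_of_injective _ Subtype.val_injective).symm
      _ ≤ k := hdeg x.val _ (by
        intro y hy
        obtain ⟨y', hy', rfl⟩ := mem_image.1 hy
        exact ht y' hy')
  have hcfA : GA.CliqueFree (k+1) :=
    cliquefree_transfer Subtype.val Subtype.val_injective (fun x y h => h) hcf
  obtain ⟨cA, hcA⟩ := IH _ GA hcard hdegA hcfA
  refine ⟨fun x => if h : x ∈ A then cA ⟨x, h⟩ else (⟨0, by omega⟩ : Fin k), ?_⟩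
  intro u w hu hw hadj
  show (if h : u ∈ A then cA ⟨u, h⟩ else (⟨0, by omega⟩ : Fin k)) ≠
    (if h : w ∈ A then cA ⟨w, h⟩ else (⟨0, by omega⟩ : Fin k))
  rw [dif_pos hu, dif_pos hw]
  exact hcA _ _ hadj

lemma cutMerge [Fintype V] (G : SimpleGraph V) (k n : ℕ) (hk : 3 ≤ k)
    (hdeg : ∀ x : V, ∀ t : Finset V, (∀ y ∈ t, G.Adj x y) → t.card ≤ k)
    (hcf : G.CliqueFree (k+1))
    (C D : Set V) (z zC zD : V)
    (hzCn : zC ∉ C) (hzDn : zD ∉ D)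
    (hU : ∀ x, x ∈ C ∨ x ∈ D)
    (hoverlap : ∀ x, x ∈ C → x ∈ D → x = z)
    (hsep : ∀ u w, G.Adj u w → (u ∈ C ∧ w ∈ C) ∨ (u ∈ D ∧ w ∈ D))
    (hn : Fintype.card V ≤ n + 1)
    (IH : ∀ (W : Type u) [Fintype W] (G' : SimpleGraph W), Fintype.card W ≤ n →
       (∀ x : W, ∀ t : Finset W, (∀ y ∈ t, G'.Adj x y) → t.card ≤ k) →
       G'.CliqueFree (k+1) → ∃ c : W → Fin k, ∀ u w, G'.Adj u w → c u ≠ c w) :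
    ∃ c : V → Fin k, ∀ u w, G.Adj u w → c u ≠ c w := by
  obtain ⟨c1, hc1⟩ := sideColor G k n hk hdeg hcf C zC hzCn hn IH
  obtain ⟨c2, hc2⟩ := sideColor G k n hk hdeg hcf D zD hzDn hn IH
  exact mergeTwo G C D z z hU (fun x h1 h2 => Or.inl (hoverlap x h1 h2)) hsep c1 c2 hc1 hc2
    (matchTwo (c1 z) (c1 z) (c2 z) (c2 z) (by simp))

lemma degenCase [Fintype V] (G : SimpleGraph V) (k n : ℕ) (hk : 3 ≤ k)
    (hdeg : ∀ x : V, ∀ t : Finset V, (∀ y ∈ t, G.Adj x y) → t.card ≤ k)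
    (hcf : G.CliqueFree (k+1))
    (a b : V) (hane : a ≠ b)
    (S T : Set V)
    (haS : a ∉ S) (hbS : b ∉ S) (haT : a ∉ T) (hbT : b ∉ T)
    (hdisj : ∀ x, x ∈ S → x ∉ T)
    (hcover : ∀ x : V, x ∈ S ∨ x ∈ T ∨ x = a ∨ x = b)
    (hsepST : ∀ x y, G.Adj x y → x ∈ S → y ∈ T → False)
    (hnoaS : ¬ ∃ s, s ∈ S ∧ G.Adj a s)
    (hSne : S.Nonempty)
    (hn : Fintype.card V ≤ n + 1)
    (IH : ∀ (W : Type u) [Fintype W] (G' : SimpleGraph W), Fintype.card W ≤ n →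
       (∀ x : W, ∀ t : Finset W, (∀ y ∈ t, G'.Adj x y) → t.card ≤ k) →
       G'.CliqueFree (k+1) → ∃ c : W → Fin k, ∀ u w, G'.Adj u w → c u ≠ c w) :
    ∃ c : V → Fin k, ∀ u w, G.Adj u w → c u ≠ c w := by
  classical
  obtain ⟨s₀, hs₀⟩ := hSne
  set C : Set V := S ∪ {b} with hC
  set D : Set V := T ∪ {a, b} with hD
  have hmemC : ∀ x : V, x ∈ S ∨ x = b → x ∈ C := by
    rintro x (h | rfl)
    · exact Or.inl h
    · exact Or.inr rfl
  have hmemD : ∀ x : V, x ∈ T ∨ x = a ∨ x = b → x ∈ D := by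
    rintro x (h | rfl | rfl)
    · exact Or.inl h
    · exact Or.inr (Or.inl rfl)
    · exact Or.inr (Or.inr rfl)
  have hCelim : ∀ x : V, x ∈ C → x ∈ S ∨ x = b := by
    rintro x (h | h)
    · exact Or.inl h
    · exact Or.inr h
  have hDelim : ∀ x : V, x ∈ D → x ∈ T ∨ x = a ∨ x = b := by
    rintro x (h | h)
    · exact Or.inl h
    · rcases h with h | h
      · exact Or.inr (Or.inl h)
      · exact Or.inr (Or.inr h)
  apply cutMerge G k n hk hdeg hcf C D b a s₀
  · intro hmem
    rcases hCelim a hmem with h | h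
    · exact haS h
    · exact hane h
  · intro hmem
    rcases hDelim s₀ hmem with h | h | h
    · exact hdisj s₀ hs₀ h
    · exact haS (h ▸ hs₀)
    · exact hbS (h ▸ hs₀)
  · intro x
    rcases hcover x with h | h | h | h
    · exact Or.inl (hmemC x (Or.inl h))
    · exact Or.inr (hmemD x (Or.inl h))
    · exact Or.inr (hmemD x (Or.inr (Or.inl h)))
    · exact Or.inl (hmemC x (Or.inr h))
  · intro x hxC hxD
    rcases hCelim x hxC with h | h
    · rcases hDelim x hxD with h2 | h2 | h2
      · exact absurd h2 (hdisj x h)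
      · exact absurd (h2 ▸ h) haS
      · exact absurd (h2 ▸ h) hbS
    · exact h
  · intro u w hadj
    have hne := G.ne_of_adj hadj
    rcases hcover u with hu | hu | hu | hu
    · rcases hcover w with hw | hw | hw | hw
      · exact Or.inl ⟨hmemC u (Or.inl hu), hmemC w (Or.inl hw)⟩
      · exact absurd (hsepST u w hadj hu hw) id
      · exact absurd ⟨u, hu, hw ▸ hadj.symm⟩ hnoaS
      · exact Or.inl ⟨hmemC u (Or.inl hu), hmemC w (Or.inr hw)⟩
    · rcases hcover w with hw | hw | hw | hw
      · exact absurd (hsepST w u hadj.symm hw hu) id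
      · exact Or.inr ⟨hmemD u (Or.inl hu), hmemD w (Or.inl hw)⟩
      · exact Or.inr ⟨hmemD u (Or.inl hu), hmemD w (Or.inr (Or.inl hw))⟩
      · exact Or.inr ⟨hmemD u (Or.inl hu), hmemD w (Or.inr (Or.inr hw))⟩
    · rcases hcover w with hw | hw | hw | hw
      · exact absurd ⟨w, hw, hu ▸ hadj⟩ hnoaS
      · exact Or.inr ⟨hmemD u (Or.inr (Or.inl hu)), hmemD w (Or.inl hw)⟩
      · exact absurd (hu.trans hw.symm) hne
      · exact Or.inr ⟨hmemD u (Or.inr (Or.inl hu)), hmemD w (Or.inr (Or.inr hw))⟩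
    · rcases hcover w with hw | hw | hw | hw
      · exact Or.inl ⟨hmemC u (Or.inr hu), hmemC w (Or.inl hw)⟩
      · exact Or.inr ⟨hmemD u (Or.inr (Or.inr hu)), hmemD w (Or.inl hw)⟩
      · exact Or.inr ⟨hmemD u (Or.inr (Or.inr hu)), hmemD w (Or.inr (Or.inl hw))⟩
      · exact absurd (hu.trans hw.symm) hne
  · exact hn
  · exact IH

theorem thmB (k : ℕ) (hk : 3 ≤ k) : ∀ (n : ℕ) (V : Type u) [Fintype V] (G : SimpleGraph V),
    Fintype.card V ≤ n →
    (∀ x : V, ∀ t : Finset V, (∀ y ∈ t, G.Adj x y) → t.card ≤ k) →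
    G.CliqueFree (k+1) → ∃ c : V → Fin k, ∀ u w, G.Adj u w → c u ≠ c w := by
  intro n
  induction n with
  | zero =>
    intro V _ G hcard _ _
    have hE : IsEmpty V := Fintype.card_eq_zero_iff.1 (by omega)
    exact ⟨fun v => (hE.false v).elim, fun u w h => (hE.false u).elim⟩
  | succ n IH =>
    intro V _ G hcard hdeg hcf
    classical
    cases isEmpty_or_nonempty V with
    | inl hE => exact ⟨fun v => (hE.false v).elim, fun u w h => (hE.false u).elim⟩
    | inr hNE =>
    by_cases hlow : ∃ v : V, ∀ t : Finset V, (∀ y ∈ t, G.Adj v y) → t.card < k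
    · obtain ⟨v, hv⟩ := hlow
      have hcard' : Fintype.card {x : V // x ≠ v} ≤ n := by
        have : Fintype.card {x : V // x ≠ v} < Fintype.card V := by
          apply Fintype.card_lt_of_injective_of_notMem Subtype.val Subtype.val_injective (b := v)
          rintro ⟨y, hy⟩
          exact y.prop hy
        omega
      set G' := G.comap (Subtype.val : {x : V // x ≠ v} → V) with hG'
      have hdeg' : ∀ x : {x : V // x ≠ v}, ∀ t : Finset {x : V // x ≠ v},
          (∀ y ∈ t, G'.Adj x y) → t.card ≤ k := by
        intro x t ht
        calc t.card = (t.image Subtype.val).card :=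
            (card_image_of_injective _ Subtype.val_injective).symm
          _ ≤ k := hdeg x.val _ (by
              intro y hy
              obtain ⟨y', hy', rfl⟩ := mem_image.1 hy
              exact ht y' hy')
      have hcf' : G'.CliqueFree (k+1) :=
        cliquefree_transfer Subtype.val Subtype.val_injective (fun x y h => h) hcf
      obtain ⟨c', hc'⟩ := IH _ G' hcard' hdeg' hcf'
      exact extendLow G k (by omega) v hv c' (fun u w h => hc' u w h)
    · push_neg at hlow
      by_cases hNA : ∃ v a b : V, G.Adj v a ∧ G.Adj v b ∧ a ≠ b ∧ ¬ G.Adj a b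
      · obtain ⟨v, a, b, hva, hvb, hane, hab⟩ := hNA
        by_cases hconn : (G.comap (Subtype.val : {x : V // x ≠ a ∧ x ≠ b} → V)).Preconnected
        · exact core3a G k hk hdeg v a b hva hvb hab hane hconn
        · rw [SimpleGraph.Preconnected] at hconn
          push_neg at hconn
          obtain ⟨u₀, w₀, hnr⟩ := hconn
          set S : Set V := {x | ∃ hx : x ≠ a ∧ x ≠ b,
            (G.comap (Subtype.val : {x : V // x ≠ a ∧ x ≠ b} → V)).Reachable u₀ ⟨x, hx⟩} with hS
          set T : Set V := {x | (x ≠ a ∧ x ≠ b) ∧ x ∉ S} with hT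
          have haS : a ∉ S := by rintro ⟨⟨h, _⟩, _⟩; exact h rfl
          have hbS : b ∉ S := by rintro ⟨⟨_, h⟩, _⟩; exact h rfl
          have haT : a ∉ T := fun h => h.1.1 rfl
          have hbT : b ∉ T := fun h => h.1.2 rfl
          have hu₀S : (u₀ : V) ∈ S := ⟨u₀.prop, by exact SimpleGraph.Reachable.refl u₀⟩
          have hw₀T : (w₀ : V) ∈ T := by
            refine ⟨w₀.prop, ?_⟩
            rintro ⟨hx, hr⟩
            exact hnr hr
          have hdisjST : ∀ x, x ∈ S → x ∉ T := fun x hx ht => ht.2 hx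
          have hcover : ∀ x : V, x ∈ S ∨ x ∈ T ∨ x = a ∨ x = b := by
            intro x
            by_cases hxa : x = a
            · exact Or.inr (Or.inr (Or.inl hxa))
            by_cases hxb : x = b
            · exact Or.inr (Or.inr (Or.inr hxb))
            by_cases hxS : x ∈ S
            · exact Or.inl hxS
            · exact Or.inr (Or.inl ⟨⟨hxa, hxb⟩, hxS⟩)
          have hsepST : ∀ x y, G.Adj x y → x ∈ S → y ∈ T → False := by
            intro x y hadj hxS hyT
            obtain ⟨hx, hr⟩ := hxS
            apply hyT.2
            refine ⟨hyT.1, hr.trans (SimpleGraph.Adj.reachable ?_)⟩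
            exact hadj
          have hSne : S.Nonempty := ⟨u₀.val, hu₀S⟩
          have hTne : T.Nonempty := ⟨w₀.val, hw₀T⟩
          -- degenerate cases: one of a, b has no neighbor in one of the sides
          by_cases haSn : ∃ s, s ∈ S ∧ G.Adj a s
          swap
          · exact degenCase G k n hk hdeg hcf a b hane S T haS hbS haT hbT hdisjST hcover
              hsepST haSn hSne hcard IH
          by_cases hbSn : ∃ s, s ∈ S ∧ G.Adj b s
          swap
          · exact degenCase G k n hk hdeg hcf b a hane.symm S T hbS haS hbT haT hdisjST
              (fun x => by rcases hcover x with h | h | h | h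
                           · exact Or.inl h
                           · exact Or.inr (Or.inl h)
                           · exact Or.inr (Or.inr (Or.inr h))
                           · exact Or.inr (Or.inr (Or.inl h)))
              hsepST hbSn hSne hcard IH
          by_cases haTn : ∃ t, t ∈ T ∧ G.Adj a t
          swap
          · exact degenCase G k n hk hdeg hcf a b hane T S haT hbT haS hbS
              (fun x hx hs => hdisjST x hs hx)
              (fun x => by rcases hcover x with h | h | h | h
                           · exact Or.inr (Or.inl h)
                           · exact Or.inl h
                           · exact Or.inr (Or.inr (Or.inl h))
                           · exact Or.inr (Or.inr (Or.inr h)))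
              (fun x y hadj hx hy => hsepST y x hadj.symm hy hx) haTn hTne hcard IH
          by_cases hbTn : ∃ t, t ∈ T ∧ G.Adj b t
          swap
          · exact degenCase G k n hk hdeg hcf b a hane.symm T S hbT haT hbS haS
              (fun x hx hs => hdisjST x hs hx)
              (fun x => by rcases hcover x with h | h | h | h
                           · exact Or.inr (Or.inl h)
                           · exact Or.inl h
                           · exact Or.inr (Or.inr (Or.inr h))
                           · exact Or.inr (Or.inr (Or.inl h)))
              (fun x y hadj hx hy => hsepST y x hadj.symm hy hx) hbTn hTne hcard IH
          -- main 2-cut analysis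
          have hcS : ∃ c : V → Fin k, propOn G (S ∪ {a, b}) c := by
            apply sideColor G k n hk hdeg hcf _ w₀.val _ hcard IH
            rintro (h | h | h)
            · exact hw₀T.2 h
            · exact w₀.prop.1 h
            · exact w₀.prop.2 h
          have hcT : ∃ c : V → Fin k, propOn G (T ∪ {a, b}) c := by
            apply sideColor G k n hk hdeg hcf _ u₀.val _ hcard IH
            rintro (h | h | h)
            · exact hdisjST u₀.val hu₀S h
            · exact u₀.prop.1 h
            · exact u₀.prop.2 h
          have hSmem : ∀ x : V, x ∈ S ∨ x = a ∨ x = b → x ∈ S ∪ ({a, b} : Set V) := by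
            rintro x (h | rfl | rfl)
            · exact Or.inl h
            · exact Or.inr (Or.inl rfl)
            · exact Or.inr (Or.inr rfl)
          have hTmem : ∀ x : V, x ∈ T ∨ x = a ∨ x = b → x ∈ T ∪ ({a, b} : Set V) := by
            rintro x (h | rfl | rfl)
            · exact Or.inl h
            · exact Or.inr (Or.inl rfl)
            · exact Or.inr (Or.inr rfl)
          have hUmain : ∀ x : V, x ∈ S ∪ ({a, b} : Set V) ∨ x ∈ T ∪ ({a, b} : Set V) := by
            intro x
            rcases hcover x with h | h | h | h
            · exact Or.inl (hSmem x (Or.inl h))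
            · exact Or.inr (hTmem x (Or.inl h))
            · exact Or.inl (hSmem x (Or.inr (Or.inl h)))
            · exact Or.inl (hSmem x (Or.inr (Or.inr h)))
          have hOmain : ∀ x : V, x ∈ S ∪ ({a, b} : Set V) → x ∈ T ∪ ({a, b} : Set V) →
              x = a ∨ x = b := by
            rintro x (hx | hx) hy
            · rcases hy with hy | hy
              · exact absurd hy (hdisjST x hx)
              · rcases hy with hy | hy
                · exact Or.inl hy
                · exact Or.inr hy
            · rcases hx with hx | hx
              · exact Or.inl hx
              · exact Or.inr hx
          have hsepMain : ∀ u w, G.Adj u w →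
              (u ∈ S ∪ ({a, b} : Set V) ∧ w ∈ S ∪ ({a, b} : Set V)) ∨
              (u ∈ T ∪ ({a, b} : Set V) ∧ w ∈ T ∪ ({a, b} : Set V)) := by
            intro u w hadj
            rcases hcover u with hu | hu | hu | hu
            · rcases hcover w with hw | hw | hw | hw
              · exact Or.inl ⟨hSmem u (Or.inl hu), hSmem w (Or.inl hw)⟩
              · exact absurd (hsepST u w hadj hu hw) id
              · exact Or.inl ⟨hSmem u (Or.inl hu), hSmem w (Or.inr (Or.inl hw))⟩
              · exact Or.inl ⟨hSmem u (Or.inl hu), hSmem w (Or.inr (Or.inr hw))⟩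
            · rcases hcover w with hw | hw | hw | hw
              · exact absurd (hsepST w u hadj.symm hw hu) id
              · exact Or.inr ⟨hTmem u (Or.inl hu), hTmem w (Or.inl hw)⟩
              · exact Or.inr ⟨hTmem u (Or.inl hu), hTmem w (Or.inr (Or.inl hw))⟩
              · exact Or.inr ⟨hTmem u (Or.inl hu), hTmem w (Or.inr (Or.inr hw))⟩
            · rcases hcover w with hw | hw | hw | hw
              · exact Or.inl ⟨hSmem u (Or.inr (Or.inl hu)), hSmem w (Or.inl hw)⟩
              · exact Or.inr ⟨hTmem u (Or.inr (Or.inl hu)), hTmem w (Or.inl hw)⟩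
              · exact Or.inl ⟨hSmem u (Or.inr (Or.inl hu)), hSmem w (Or.inr (Or.inl hw))⟩
              · exact Or.inl ⟨hSmem u (Or.inr (Or.inl hu)), hSmem w (Or.inr (Or.inr hw))⟩
            · rcases hcover w with hw | hw | hw | hw
              · exact Or.inl ⟨hSmem u (Or.inr (Or.inr hu)), hSmem w (Or.inl hw)⟩
              · exact Or.inr ⟨hTmem u (Or.inr (Or.inr hu)), hTmem w (Or.inl hw)⟩
              · exact Or.inl ⟨hSmem u (Or.inr (Or.inr hu)), hSmem w (Or.inr (Or.inl hw))⟩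
              · exact Or.inl ⟨hSmem u (Or.inr (Or.inr hu)), hSmem w (Or.inr (Or.inr hw))⟩
          by_cases hPSne : ∃ c : V → Fin k, propOn G (S ∪ {a, b}) c ∧ c a ≠ c b
          · by_cases hPTne : ∃ c : V → Fin k, propOn G (T ∪ {a, b}) c ∧ c a ≠ c b
            · -- merge ne-ne
              obtain ⟨c1, hc1, hc1ne⟩ := hPSne
              obtain ⟨c2, hc2, hc2ne⟩ := hPTne
              exact mergeTwo G _ _ a b hUmain hOmain hsepMain c1 c2 hc1 hc2
                (matchTwo (c1 a) (c1 b) (c2 a) (c2 b)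
                  ⟨fun h => absurd h hc1ne, fun h => absurd h hc2ne⟩)
            · -- T side is pure-eq : apply core3b with roles (T, S) swapped
              by_cases hPSeq : ∃ c : V → Fin k, propOn G (S ∪ {a, b}) c ∧ c a = c b
              · -- merge eq-eq? no : S has both; T must have eq (from hcT)
                obtain ⟨c2, hc2⟩ := hcT
                have hc2eq : c2 a = c2 b := by
                  by_contra hne2
                  exact hPTne ⟨c2, hc2, hne2⟩
                obtain ⟨c1, hc1, hc1eq⟩ := hPSeq
                exact mergeTwo G _ _ a b hUmain hOmain hsepMain c1 c2 hc1 hc2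
                  (matchTwo (c1 a) (c1 b) (c2 a) (c2 b)
                    ⟨fun _ => hc2eq, fun _ => hc1eq⟩)
              · -- S pure-ne, T pure-eq : core3b with S := T, T := S
                exact (core3b G k n hk hdeg hcf a b hane hab T S haT hbT haS hbS
                  (fun x hx hs => hdisjST x hs hx) haSn hbSn hTne hSne
                  hPTne hPSeq hcard IH).elim
          · -- S side pure-eq
            by_cases hPTeq : ∃ c : V → Fin k, propOn G (T ∪ {a, b}) c ∧ c a = c b
            · -- T has eq; S has eq (from hcS) : merge eq-eq
              obtain ⟨c1, hc1⟩ := hcS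
              have hc1eq : c1 a = c1 b := by
                by_contra hne1
                exact hPSne ⟨c1, hc1, hne1⟩
              obtain ⟨c2, hc2, hc2eq⟩ := hPTeq
              exact mergeTwo G _ _ a b hUmain hOmain hsepMain c1 c2 hc1 hc2
                (matchTwo (c1 a) (c1 b) (c2 a) (c2 b) ⟨fun _ => hc2eq, fun _ => hc1eq⟩)
            · -- S pure-eq, T pure-ne : core3b with (S, T)
              exact (core3b G k n hk hdeg hcf a b hane hab S T haS hbS haT hbT
                hdisjST haTn hbTn hSne hTne hPSne hPTeq hcard IH).elim
      · -- every neighborhood is a clique : find a (k+1)-clique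
        push_neg at hNA
        obtain ⟨v₀⟩ := hNE
        obtain ⟨t, ht, htk⟩ := hlow v₀
        obtain ⟨t', ht'sub, ht'card⟩ := Finset.exists_subset_card_eq htk
        have hvt' : v₀ ∉ t' := fun hmem => G.irrefl (ht v₀ (ht'sub hmem))
        have hclique : G.IsNClique (k+1) (insert v₀ t') := by
          constructor
          · intro x hx y hy hxy
            simp only [coe_insert, Set.mem_insert_iff, mem_coe] at hx hy
            rcases hx with rfl | hx
            · rcases hy with rfl | hy
              · exact absurd rfl hxy
              · exact ht y (ht'sub hy)
            · rcases hy with rfl | hy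
              · exact (ht x (ht'sub hx)).symm
              · exact hNA v₀ x y (ht x (ht'sub hx)) (ht y (ht'sub hy)) hxy
          · rw [card_insert_of_notMem hvt', ht'card]
        exact (hcf _ hclique).elim
theorem lemS (k : ℕ) (hk : 3 ≤ k) : ∀ (n : ℕ) (V : Type u) [Fintype V] (G : SimpleGraph V),
    Fintype.card V ≤ n →
    (∀ s : Finset V, ∑ v ∈ s, {u | u ∈ s ∧ G.Adj v u}.ncard ≤ k * s.card) →
    G.CliqueFree (k+1) → ∃ c : V → Fin k, ∀ u w, G.Adj u w → c u ≠ c w := by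
  intro n
  induction n with
  | zero =>
    intro V _ G hcard _ _
    have hE : IsEmpty V := Fintype.card_eq_zero_iff.1 (by omega)
    exact ⟨fun v => (hE.false v).elim, fun u w h => (hE.false u).elim⟩
  | succ n IH =>
    intro V _ G hcard havg hcf
    classical
    have havg' : ∀ s : Finset V, ∑ v ∈ s, (s.filter (fun u => G.Adj v u)).card ≤ k * s.card := by
      intro s
      have := havg s
      have heq : ∀ v : V, {u | u ∈ s ∧ G.Adj v u}.ncard = (s.filter (fun u => G.Adj v u)).card := by
        intro v
        rw [show {u | u ∈ s ∧ G.Adj v u} = ↑(s.filter (fun u => G.Adj v u)) from by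
          ext u; simp, Set.ncard_coe_finset]
      calc ∑ v ∈ s, (s.filter (fun u => G.Adj v u)).card
          = ∑ v ∈ s, {u | u ∈ s ∧ G.Adj v u}.ncard := by
            exact Finset.sum_congr rfl (fun v _ => (heq v).symm)
        _ ≤ k * s.card := this
    by_cases hlow : ∃ v : V, ∀ t : Finset V, (∀ y ∈ t, G.Adj v y) → t.card < k
    · obtain ⟨v, hv⟩ := hlow
      have hcard' : Fintype.card {x : V // x ≠ v} ≤ n := by
        have : Fintype.card {x : V // x ≠ v} < Fintype.card V := by
          apply Fintype.card_lt_of_injective_of_notMem Subtype.val Subtype.val_injective (b := v)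
          rintro ⟨y, hy⟩
          exact y.prop hy
        omega
      set G' := G.comap (Subtype.val : {x : V // x ≠ v} → V) with hG'
      have hcf' : G'.CliqueFree (k+1) :=
        cliquefree_transfer Subtype.val Subtype.val_injective (fun x y h => h) hcf
      have havg'' : ∀ s : Finset {x : V // x ≠ v},
          ∑ x ∈ s, {u | u ∈ s ∧ G'.Adj x u}.ncard ≤ k * s.card := by
        intro s
        set s' : Finset V := s.image Subtype.val with hs'
        have hset : ∀ x : {x : V // x ≠ v}, {u | u ∈ s ∧ G'.Adj x u}.ncard
            = (s.filter (fun u => G'.Adj x u)).card := by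
          intro x
          rw [show {u | u ∈ s ∧ G'.Adj x u} = ↑(s.filter (fun u => G'.Adj x u)) from by
            ext u; simp, Set.ncard_coe_finset]
        have hkey : ∀ x : {x : V // x ≠ v}, (s.filter (fun u => G'.Adj x u)).card
            = (s'.filter (fun u => G.Adj x.val u)).card := by
          intro x
          rw [← card_image_of_injective (s.filter (fun u => G'.Adj x u)) Subtype.val_injective]
          congr 1
          ext u
          simp only [mem_image, mem_filter, hs']
          constructor
          · rintro ⟨y, ⟨hy, hadj⟩, rfl⟩
            exact ⟨⟨y, hy, rfl⟩, hadj⟩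
          · rintro ⟨⟨y, hy, rfl⟩, hadj⟩
            exact ⟨y, ⟨hy, hadj⟩, rfl⟩
        calc ∑ x ∈ s, {u | u ∈ s ∧ G'.Adj x u}.ncard
            = ∑ x ∈ s, (s'.filter (fun u => G.Adj x.val u)).card :=
              Finset.sum_congr rfl (fun x _ => (hset x).trans (hkey x))
          _ = ∑ u ∈ s', (s'.filter (fun w => G.Adj u w)).card := by
              rw [hs']
              exact (Finset.sum_image
                (f := fun u => ((s.image Subtype.val).filter (fun w => G.Adj u w)).card)
                (g := Subtype.val)
                (fun y _ z _ h => Subtype.val_injective h)).symm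
          _ ≤ k * s'.card := havg' s'
          _ = k * s.card := by
              rw [hs', card_image_of_injective _ Subtype.val_injective]
      obtain ⟨c', hc'⟩ := IH _ G' hcard' havg'' hcf'
      exact extendLow G k (by omega) v hv c' (fun u w h => hc' u w h)
    · push_neg at hlow
      have hterm : ∀ v : V, k ≤ (univ.filter (fun y => G.Adj v y)).card := by
        intro v
        obtain ⟨tv, htv, htvk⟩ := hlow v
        calc k ≤ tv.card := htvk
          _ ≤ _ := card_le_card (fun y hy => mem_filter.2 ⟨mem_univ y, htv y hy⟩)
      have hdeg : ∀ x : V, ∀ t : Finset V, (∀ y ∈ t, G.Adj x y) → t.card ≤ k := by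
        intro x t ht
        have hsub : t ⊆ univ.filter (fun y => G.Adj x y) :=
          fun y hy => mem_filter.2 ⟨mem_univ y, ht y hy⟩
        have h1 : t.card ≤ (univ.filter (fun y => G.Adj x y)).card := card_le_card hsub
        have hsum := havg' univ
        have hsum2 : ∀ v : V, (univ.filter (fun u => G.Adj v u)).card
            = (univ.filter (fun y => G.Adj v y)).card := fun v => rfl
        have herase : ∑ v ∈ univ.erase x, (univ.filter (fun u => G.Adj v u)).card
            + (univ.filter (fun u => G.Adj x u)).card
            = ∑ v ∈ univ, (univ.filter (fun u => G.Adj v u)).card :=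
          Finset.sum_erase_add univ _ (mem_univ x)
        have hlower : (univ.erase x).card * k ≤
            ∑ v ∈ univ.erase x, (univ.filter (fun u => G.Adj v u)).card := by
          have := Finset.card_nsmul_le_sum (univ.erase x)
            (fun v => (univ.filter (fun u => G.Adj v u)).card) k (fun v _ => hterm v)
          rwa [smul_eq_mul] at this
        have hce : (univ.erase x).card = Fintype.card V - 1 := by
          rw [card_erase_of_mem (mem_univ x), card_univ]
        have hcu : (univ : Finset V).card = Fintype.card V := card_univ
        have hpos : 1 ≤ Fintype.card V := Fintype.card_pos_iff.2 ⟨x⟩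
        obtain ⟨m, hm⟩ : ∃ m, Fintype.card V = m + 1 := ⟨Fintype.card V - 1, by omega⟩
        rw [hce, hm] at hlower
        rw [hcu, hm] at hsum
        simp only [Nat.add_sub_cancel] at hlower
        have hmk : k * (m + 1) = m * k + k := by ring
        omega
      exact thmB k hk (n+1) V G hcard hdeg hcf

/-- If `k > 2` and every subgraph of the finite graph `G` has average degree at most `k`
(i.e. for every vertex subset `s`, the sum over `v ∈ s` of the degrees of `v` within `s`
is at most `k * |s|`), then `G` contains a clique on `k + 1` vertices or `χ(G) ≤ k`. -/
theorem stmt4 {V : Type*} [Fintype V] (G : SimpleGraph V) (k : ℕ) (hk : 2 < k)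
    (havg : ∀ s : Finset V, ∑ v ∈ s, {u | u ∈ s ∧ G.Adj v u}.ncard ≤ k * s.card) :
    (∃ t : Finset V, t.card = k + 1 ∧ ∀ u ∈ t, ∀ v ∈ t, u ≠ v → G.Adj u v) ∨
      G.chromaticNumber ≤ (k : ℕ∞) := by
  classical
  by_cases hcl : ∃ t : Finset V, t.card = k + 1 ∧ ∀ u ∈ t, ∀ v ∈ t, u ≠ v → G.Adj u v
  · exact Or.inl hcl
  · right
    have hcf : G.CliqueFree (k+1) := by
      intro t ht
      exact hcl ⟨t, ht.2, fun u hu v hv huv => ht.1 (Finset.mem_coe.2 hu) (Finset.mem_coe.2 hv) huv⟩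
    obtain ⟨c, hc⟩ := lemS k (by omega) (Fintype.card V) V G le_rfl havg hcf
    rw [SimpleGraph.chromaticNumber_le_iff_colorable]
    exact ⟨SimpleGraph.Coloring.mk c (fun {u w} h => hc u w h)⟩
end

section
/- Let G be a finite directed graph. Define a coloring β by iteratively removing, at step i, the set C_i of all vertices of out-degree 0 in the current graph, and setting β(u) = i for u in C_i. If G is acyclic this process terminates with the empty graph, and the number of colors used equals the number of vertices on a longest directed path in G; in particular, G contains a directed path on χ(Ĝ) vertices, where Ĝ is the underlying undirected graph (Gallai–Roy–Vitaver theorem). -/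
/-- A directed cycle: a nonempty list of pairwise distinct vertices, with an edge
between consecutive vertices and an edge from the last vertex back to the first. -/
def IsDirCycle {V : Type*} (E : V → V → Prop) (l : List V) : Prop :=
  l ≠ [] ∧ l.Nodup ∧ l.Chain' E ∧ ∀ h : l ≠ [], E (l.getLast h) (l.head h)

/-- `remaining E i` is the set of vertices left after `i` rounds of the process that
repeatedly removes all vertices of out-degree `0` in the current graph. -/
def remaining {V : Type*} (E : V → V → Prop) : ℕ → Set V
  | 0 => Set.univ
  | (i + 1) =>
      remaining E i \ {v | v ∈ remaining E i ∧ ∀ w ∈ remaining E i, ¬ E v w}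

section Helpers

variable {V : Type*} [Fintype V] {E : V → V → Prop}

lemma remaining_succ (E : V → V → Prop) (i : ℕ) :
    remaining E (i + 1) =
      remaining E i \ {v | v ∈ remaining E i ∧ ∀ w ∈ remaining E i, ¬ E v w} := rfl

lemma remaining_antitone (E : V → V → Prop) : Antitone (remaining E) :=
  antitone_nat_of_succ_le fun _ => Set.diff_subset

/-- In a finite acyclic digraph, every nonempty set of vertices contains a vertex with no
out-neighbour inside the set. -/
lemma exists_sink (hacyc : ∀ l : List V, ¬ IsDirCycle E l) {S : Set V} (hS : S.Nonempty) :
    ∃ v ∈ S, ∀ w ∈ S, ¬ E v w := by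
  classical
  by_contra hcon
  push_neg at hcon
  obtain ⟨v0, hv0⟩ := hS
  have h' : ∀ v : S, ∃ w : S, E v w := by
    rintro ⟨v, hv⟩
    obtain ⟨w, hw, hE⟩ := hcon v hv
    exact ⟨⟨w, hw⟩, hE⟩
  choose f hf using h'
  set g : ℕ → S := fun n => f^[n] ⟨v0, hv0⟩ with hg_def
  have hg : ∀ n, E (g n : V) (g (n + 1) : V) := by
    intro n
    have h1 : g (n + 1) = f (g n) := Function.iterate_succ_apply' f n _
    rw [h1]
    exact hf (g n)
  obtain ⟨a, b, hab, heq⟩ := Finite.exists_ne_map_eq_of_infinite g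
  have hP : ∃ j, ∃ i, i < j ∧ g i = g j := by
    rcases hab.lt_or_gt with h | h
    · exact ⟨b, a, h, heq⟩
    · exact ⟨a, b, h, heq.symm⟩
  set j0 := Nat.find hP with hj0
  obtain ⟨i0, hij, hgeq⟩ := Nat.find_spec hP
  rw [← hj0] at hij hgeq
  have hmin : ∀ m, m < j0 → ¬ ∃ i, i < m ∧ g i = g m := fun m hm => Nat.find_min hP hm
  set n := j0 - i0 with hn
  have hnpos : 0 < n := Nat.sub_pos_of_lt hij
  set l : List V := List.ofFn (fun t : Fin n => (g (i0 + t) : V)) with hl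
  have hlen : l.length = n := List.length_ofFn
  have hlne : l ≠ [] := by
    intro h
    rw [h] at hlen
    simp at hlen
    omega
  have hinj : Function.Injective (fun t : Fin n => (g (i0 + t) : V)) := by
    have key : ∀ s t : Fin n, s < t → (g (i0 + s) : V) ≠ (g (i0 + t) : V) := by
      intro s t hst hne
      have hgeq' : g (i0 + s) = g (i0 + t) := Subtype.ext hne
      have htlt : i0 + (t : ℕ) < j0 := by omega
      exact hmin (i0 + t) htlt ⟨i0 + s, by omega, hgeq'⟩
    intro s t hst
    by_contra hne
    rcases Ne.lt_or_gt hne with h | h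
    · exact key s t h hst
    · exact key t s h hst.symm
  apply hacyc l
  refine ⟨hlne, ?_, ?_, ?_⟩
  · rw [hl, List.nodup_ofFn]
    exact hinj
  · rw [hl]
    show List.IsChain _ _
    rw [List.isChain_iff_getElem]
    intro i hi
    simp only [List.getElem_ofFn, Fin.val_mk]
    have : i0 + (i + 1) = (i0 + i) + 1 := by omega
    rw [this]
    exact hg (i0 + i)
  · have key : E (g (i0 + (n - 1)) : V) (g i0 : V) := by
      have h2 : i0 + (n - 1) + 1 = j0 := by omega
      have h3 := hg (i0 + (n - 1))
      rw [h2, ← hgeq] at h3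
      exact h3
    rw [hl]
    intro h
    rw [List.getLast_ofFn, List.head_ofFn]
    simpa using key

lemma remaining_eventually_empty (hacyc : ∀ l : List V, ¬ IsDirCycle E l) :
    ∃ k, remaining E k = ∅ := by
  by_contra h
  push_neg at h
  have key : ∀ k, (remaining E k).ncard + k ≤ Fintype.card V := by
    intro k
    induction k with
    | zero => simp [remaining, Set.ncard_univ]
    | succ k ih =>
      have hne : (remaining E k).Nonempty := h k
      obtain ⟨v, hv, hvs⟩ := exists_sink hacyc hne
      have hss : remaining E (k + 1) ⊂ remaining E k := by
        refine ⟨Set.diff_subset, fun hsub => ?_⟩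
        have hmem : v ∈ remaining E (k + 1) := hsub hv
        rw [remaining_succ] at hmem
        exact hmem.2 ⟨hv, hvs⟩
      have := Set.ncard_lt_ncard hss (Set.toFinite _)
      omega
  have h1 := key (Fintype.card V + 1)
  have hne : (remaining E (Fintype.card V + 1)).Nonempty := h _
  have h2 : 0 < (remaining E (Fintype.card V + 1)).ncard :=
    (Set.ncard_pos (Set.toFinite _)).mpr hne
  omega

/-- The round at which a vertex is removed. -/
noncomputable def rk (E : V → V → Prop) (v : V) : ℕ := sInf {i | v ∉ remaining E (i + 1)}

lemma rk_set_nonempty (h : ∃ k, remaining E k = ∅) (v : V) :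
    {i | v ∉ remaining E (i + 1)}.Nonempty := by
  obtain ⟨k, hk⟩ := h
  refine ⟨k, fun hv => ?_⟩
  have : v ∈ remaining E k := Set.diff_subset hv
  rw [hk] at this
  exact this

lemma rk_not_mem (h : ∃ k, remaining E k = ∅) (v : V) :
    v ∉ remaining E (rk E v + 1) := Nat.sInf_mem (rk_set_nonempty h v)

lemma rk_mem (h : ∃ k, remaining E k = ∅) (v : V) : v ∈ remaining E (rk E v) := by
  cases hr : rk E v with
  | zero => simp [remaining]
  | succ m =>
    by_contra hv
    have h1 : rk E v ≤ m := Nat.sInf_le hv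
    omega

lemma mem_remaining_iff (h : ∃ k, remaining E k = ∅) {v : V} {i : ℕ} :
    v ∈ remaining E i ↔ i ≤ rk E v := by
  constructor
  · intro hv
    by_contra hc
    push_neg at hc
    have hsub : remaining E i ⊆ remaining E (rk E v + 1) := remaining_antitone E hc
    exact rk_not_mem h v (hsub hv)
  · intro hle
    exact remaining_antitone E hle (rk_mem h v)

lemma rk_lt_of_edge (h : ∃ k, remaining E k = ∅) {v w : V} (hE : E v w) :
    rk E w < rk E v := by
  have hv1 := rk_not_mem h v
  have hv0 := rk_mem h v
  rw [remaining_succ] at hv1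
  have hvB : v ∈ {u | u ∈ remaining E (rk E v) ∧ ∀ w ∈ remaining E (rk E v), ¬ E u w} := by
    by_contra h'
    exact hv1 ⟨hv0, h'⟩
  have hw : w ∉ remaining E (rk E v) := fun hw' => hvB.2 w hw' hE
  have : ¬ (rk E v ≤ rk E w) := fun hle => hw ((mem_remaining_iff h).mpr hle)
  omega

lemma rk_lt_of_remaining_empty (h : ∃ k, remaining E k = ∅) {k : ℕ}
    (hk : remaining E k = ∅) (v : V) : rk E v < k := by
  by_contra hc
  push_neg at hc
  have := remaining_antitone E hc (rk_mem h v)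
  rw [hk] at this
  exact this

lemma exists_rk_eq (hacyc : ∀ l : List V, ¬ IsDirCycle E l)
    (h : ∃ k, remaining E k = ∅) {m : ℕ} (hm : remaining E m ≠ ∅) :
    ∃ v, rk E v = m := by
  obtain ⟨v, hv, hvs⟩ := exists_sink hacyc (Set.nonempty_iff_ne_empty.mpr hm)
  refine ⟨v, le_antisymm ?_ ?_⟩
  · refine Nat.sInf_le ?_
    intro hv'
    rw [remaining_succ] at hv'
    exact hv'.2 ⟨hv, hvs⟩
  · exact (mem_remaining_iff h).mp hv

lemma exists_path (h : ∃ k, remaining E k = ∅) :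
    ∀ (n : ℕ) (v : V), rk E v = n →
      ∃ l : List V, l.Chain' E ∧ l.length = n + 1 ∧ l.head? = some v := by
  intro n
  induction n with
  | zero => exact fun v _ => ⟨[v], List.isChain_singleton v, by simp, rfl⟩
  | succ m ih =>
    intro v hv
    have hvmem : v ∈ remaining E (m + 1) := by
      rw [← hv]; exact rk_mem h v
    rw [remaining_succ, Set.mem_diff] at hvmem
    obtain ⟨hvA, hvnB⟩ := hvmem
    have hex : ∃ w ∈ remaining E m, E v w := by
      by_contra hc
      push_neg at hc
      exact hvnB ⟨hvA, hc⟩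
    obtain ⟨w, hw, hEvw⟩ := hex
    have h1 : m ≤ rk E w := (mem_remaining_iff h).mp hw
    have h2 : rk E w < rk E v := rk_lt_of_edge h hEvw
    have hrw : rk E w = m := by omega
    obtain ⟨l, hch, hlen, hhd⟩ := ih w hrw
    refine ⟨v :: l, List.isChain_cons.mpr ⟨?_, hch⟩, by simp [hlen], rfl⟩
    intro y hy
    rw [hhd] at hy
    obtain rfl : w = y := by simpa using hy
    exact hEvw

lemma chain'_nodup (h : ∃ k, remaining E k = ∅) {l : List V} (hch : l.Chain' E) :
    l.Nodup := by
  have h2 : l.Chain' (fun a b => rk E b < rk E a) :=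
    List.IsChain.imp (fun ⦃a b⦄ hab => rk_lt_of_edge h hab) hch
  haveI : IsTrans V (fun a b => rk E b < rk E a) := ⟨fun _ _ _ h1 h2 => h2.trans h1⟩
  haveI : Trans (fun a b : V => rk E b < rk E a) (fun a b : V => rk E b < rk E a)
      (fun a b : V => rk E b < rk E a) := ⟨fun h1 h2 => h2.trans h1⟩
  have hp := List.isChain_iff_pairwise.mp h2
  exact hp.imp fun hab => by
    intro heq
    rw [heq] at hab
    exact lt_irrefl _ hab

lemma chain'_length_le (h : ∃ k, remaining E k = ∅) {k : ℕ} (hk : remaining E k = ∅)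
    {l : List V} (hch : l.Chain' E) : l.length ≤ k := by
  classical
  have h2 : l.Chain' (fun a b => rk E b < rk E a) :=
    List.IsChain.imp (fun ⦃a b⦄ hab => rk_lt_of_edge h hab) hch
  haveI : IsTrans V (fun a b => rk E b < rk E a) := ⟨fun _ _ _ h1 h2 => h2.trans h1⟩
  haveI : Trans (fun a b : V => rk E b < rk E a) (fun a b : V => rk E b < rk E a)
      (fun a b : V => rk E b < rk E a) := ⟨fun h1 h2 => h2.trans h1⟩
  have hp : (l.map (rk E)).Pairwise (fun a b => b < a) :=
    List.pairwise_map.mpr (List.isChain_iff_pairwise.mp h2)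
  have hnd : (l.map (rk E)).Nodup := hp.imp fun hab => ne_of_gt hab
  have hsub : (l.map (rk E)).toFinset ⊆ Finset.range k := by
    intro x hx
    rw [List.mem_toFinset, List.mem_map] at hx
    obtain ⟨v, _, rfl⟩ := hx
    simpa using rk_lt_of_remaining_empty h hk v
  calc l.length = (l.map (rk E)).length := (List.length_map _).symm
    _ = (l.map (rk E)).toFinset.card := (List.toFinset_card_of_nodup hnd).symm
    _ ≤ (Finset.range k).card := Finset.card_le_card hsub
    _ = k := Finset.card_range k

end Helpers

/-- For a finite acyclic directed graph the removal process terminates with the empty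
graph; the number of rounds used equals the number of vertices on a longest directed
path; in particular `G` contains a directed path on `χ(Ĝ)` vertices (Gallai–Roy–Vitaver). -/
theorem stmt8 {V : Type*} [Fintype V] (E : V → V → Prop)
    (hacyc : ∀ l : List V, ¬ IsDirCycle E l) :
    (∃ k, remaining E k = ∅) ∧
    (∀ k, IsLeast {k | remaining E k = ∅} k →
        IsGreatest {n | ∃ l : List V, l.Nodup ∧ l.Chain' E ∧ l.length = n} k) ∧
    (∃ l : List V, l.Nodup ∧ l.Chain' E ∧
        (l.length : ℕ∞) = (SimpleGraph.fromRel E).chromaticNumber) := by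
  classical
  have hex : ∃ k, remaining E k = ∅ := remaining_eventually_empty hacyc
  refine ⟨hex, ?_, ?_⟩
  · intro k hk
    constructor
    · cases k with
      | zero => exact ⟨[], List.nodup_nil, List.isChain_nil, rfl⟩
      | succ m =>
        have hm : remaining E m ≠ ∅ := fun h' => by
          have := hk.2 h'
          omega
        obtain ⟨v, hv⟩ := exists_rk_eq hacyc hex hm
        obtain ⟨l, hch, hlen, _⟩ := exists_path hex m v hv
        exact ⟨l, chain'_nodup hex hch, hch, hlen⟩
    · rintro n ⟨l, hnd, hch, rfl⟩
      exact chain'_length_le hex hk.1 hch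
  · set G := SimpleGraph.fromRel E with hG
    set k0 := sInf {k | remaining E k = ∅} with hk0def
    have hk0 : remaining E k0 = ∅ := Nat.sInf_mem hex
    have hcol : G.Colorable k0 := by
      refine ⟨SimpleGraph.Coloring.mk
        (fun v => (⟨rk E v, rk_lt_of_remaining_empty hex hk0 v⟩ : Fin k0)) ?_⟩
      intro v w hadj
      rw [hG, SimpleGraph.fromRel_adj] at hadj
      obtain ⟨hne, hor⟩ := hadj
      have hrne : rk E v ≠ rk E w := by
        rcases hor with h' | h'
        · exact ne_of_gt (rk_lt_of_edge hex h')
        · exact ne_of_lt (rk_lt_of_edge hex h')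
      simpa [Fin.ext_iff] using hrne
    have hle : G.chromaticNumber ≤ (k0 : ℕ∞) := hcol.chromaticNumber_le
    have hne_top : G.chromaticNumber ≠ ⊤ := by
      intro h'
      rw [h'] at hle
      simp at hle
    obtain ⟨n, hcoe⟩ : ∃ n : ℕ, (n : ℕ∞) = G.chromaticNumber :=
      ⟨_, ENat.coe_toNat hne_top⟩
    have hnle : n ≤ k0 := by
      rw [← hcoe] at hle
      exact_mod_cast hle
    match n, hcoe, hnle with
    | 0, hcoe, _ => exact ⟨[], by simp, List.isChain_nil, by simpa using hcoe⟩
    | (m + 1), hcoe, hnle =>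
      have hm : remaining E m ≠ ∅ := fun h' => by
        have : k0 ≤ m := Nat.sInf_le h'
        omega
      obtain ⟨v, hv⟩ := exists_rk_eq hacyc hex hm
      obtain ⟨l, hch, hlen, _⟩ := exists_path hex m v hv
      refine ⟨l, chain'_nodup hex hch, hch, ?_⟩
      rw [hlen]
      exact hcoe
end

section
/- Let G be a K_{2,r}-free undirected graph (r ≥ 2) with χ(G) ≥ (rs)^s. Then for every optimal proper coloring of G, every tree on s vertices is present as an induced rainbow subgraph of G. -/
/-!
Root the tree and blow it up by giving every node `m = r s` copies of each of its children; the
blow-up has at most `s m^(s-1) ≤ χ(G)` nodes. The Gyárfás–Szemerédi–Tuza recolouring argument,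
run with prescribed colours, places a rainbow homomorphic image of the blow-up in `G`. Inside it
the tree is re-embedded greedily in breadth-first order: when a child `y` of an embedded vertex
`x` is placed, every other embedded vertex is adjacent to at most `r - 1` of the `m` copies of `y`
below `x` (otherwise `K_{2,r}` appears), and there are fewer than `s` of them, so some copy is
adjacent to none and the embedding stays induced. Rainbowness is inherited from the blow-up.
-/

def K2rFree {V : Type*} (G : SimpleGraph V) (r : ℕ) : Prop :=
  ¬ ∃ (u x : V) (w : Fin r → V), Function.Injective w ∧ u ≠ x ∧
      (∀ i, w i ≠ u ∧ w i ≠ x) ∧ ∀ i, G.Adj u (w i) ∧ G.Adj x (w i)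

open Finset Function

section RainbowPattern

variable {V ι : Type*} {G : SimpleGraph V} {c : V → ℕ} {σ : ι → ℕ} {par : ι → ι} {j₀ : ι}

/-- `u` can be the image of `j` in a copy, coloured by `σ`, of the part of the pattern below `j`;
the children of `j` are the `y ≠ j₀` with `par y = j`. -/
inductive RootsRainbowCopy (G : SimpleGraph V) (c : V → ℕ) (σ : ι → ℕ) (par : ι → ι) (j₀ : ι) :
    ι → V → Prop
  | intro {j : ι} {u : V} (next : ι → V) : c u = σ j →
      (∀ y, y ≠ j₀ → par y = j → G.Adj u (next y)) →
      (∀ y, y ≠ j₀ → par y = j → RootsRainbowCopy G c σ par j₀ y (next y)) →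
      RootsRainbowCopy G c σ par j₀ j u

theorem RootsRainbowCopy.exists_child_of_not {j : ι} {u : V} (hu : c u = σ j)
    (h : ¬ RootsRainbowCopy G c σ par j₀ j u) :
    ∃ y, y ≠ j₀ ∧ par y = j ∧ ∀ v, G.Adj u v → ¬ RootsRainbowCopy G c σ par j₀ y v := by
  by_contra! h'
  have : Nonempty V := ⟨u⟩
  choose! next hadj hnext using h'
  exact h (.intro next hu hadj hnext)

theorem card_image_le_of_chromaticNumber_eq [Fintype V]
    (hopt : (#(univ.image c) : ℕ∞) = G.chromaticNumber) {c' : V → ℕ}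
    (hc' : ∀ u v, G.Adj u v → c' u ≠ c' v) : #(univ.image c) ≤ #(univ.image c') := by
  classical
  let C : G.Coloring (univ.image c') :=
    .mk (fun v => ⟨c' v, mem_image_of_mem c' (mem_univ v)⟩)
      (fun {u v} h => by simpa [Subtype.ext_iff] using hc' u v h)
  have := C.colorable.chromaticNumber_le
  rw [← hopt, Fintype.card_coe] at this
  exact_mod_cast this

/-- If no vertex roots the whole pattern, recolouring every vertex `u` that fails to root the
node of its colour by the colour of a child it cannot reach gives a proper colouring that avoids
`σ j₀`, contradicting optimality. -/
theorem exists_rootsRainbowCopy [Fintype V] (hc : ∀ u v, G.Adj u v → c u ≠ c v)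
    (hopt : (#(univ.image c) : ℕ∞) = G.chromaticNumber) (hσ : Injective σ)
    (hσc : ∀ j, σ j ∈ univ.image c) : ∃ u, RootsRainbowCopy G c σ par j₀ j₀ u := by
  classical
  by_contra! hroot
  let Bad (u : V) : Prop := ∃ j, σ j = c u ∧ ¬ RootsRainbowCopy G c σ par j₀ j u
  have hchild : ∀ u, ∃ y, Bad u →
      y ≠ j₀ ∧ σ (par y) = c u ∧ ∀ v, G.Adj u v → ¬ RootsRainbowCopy G c σ par j₀ y v := by
    intro u
    by_cases hu : Bad u
    · obtain ⟨j, hj, hnot⟩ := hu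
      obtain ⟨y, hy, rfl, hyv⟩ := RootsRainbowCopy.exists_child_of_not hj.symm hnot
      exact ⟨y, fun _ => ⟨hy, hj, hyv⟩⟩
    · exact ⟨j₀, fun h => absurd h hu⟩
  choose y hy using hchild
  let c' (u : V) : ℕ := if Bad u then σ (y u) else c u
  have hproper : ∀ u v, G.Adj u v → c' u ≠ c' v := by
    intro u v huv
    have hgood : ∀ w j, ¬ Bad w → σ j = c w → RootsRainbowCopy G c σ par j₀ j w :=
      fun w j hw hj => by_contra fun h => hw ⟨j, hj, h⟩
    by_cases hu : Bad u <;> by_cases hv : Bad v <;> simp only [c', hu, hv, if_true, if_false]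
    · intro he
      have := (hy u hu).2.1
      rw [hσ he, (hy v hv).2.1] at this
      exact hc u v huv this.symm
    · exact fun he => (hy u hu).2.2 v huv (hgood v _ hv he)
    · exact fun he => (hy v hv).2.2 u huv.symm (hgood u _ hu he.symm)
    · exact hc u v huv
  have hsub : univ.image c' ⊆ (univ.image c).erase (σ j₀) := by
    intro b hb
    obtain ⟨u, -, rfl⟩ := mem_image.mp hb
    by_cases hu : Bad u <;> simp only [c', hu, if_true, if_false, mem_erase]
    · exact ⟨fun he => (hy u hu).1 (hσ he), hσc _⟩
    · exact ⟨fun he => hu ⟨j₀, he.symm, hroot u⟩, mem_image_of_mem c (mem_univ u)⟩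
  have hle := card_image_le_of_chromaticNumber_eq hopt hproper
  have := card_le_card hsub
  rw [card_erase_of_mem (hσc j₀)] at this
  have := card_pos.mpr ⟨σ j₀, hσc j₀⟩
  omega

theorem RootsRainbowCopy.exists_hom {dp : ι → ℕ} (hdp₀ : dp j₀ = 0)
    (hdp : ∀ j, j ≠ j₀ → dp (par j) + 1 = dp j) {u₀ : V}
    (h₀ : RootsRainbowCopy G c σ par j₀ j₀ u₀) :
    ∃ g : ι → V, (∀ j, c (g j) = σ j) ∧ ∀ j, j ≠ j₀ → G.Adj (g (par j)) (g j) := by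
  have hnext : ∀ j u, ∃ v, RootsRainbowCopy G c σ par j₀ (par j) u → j ≠ j₀ →
      G.Adj u v ∧ RootsRainbowCopy G c σ par j₀ j v := by
    intro j u
    by_cases hu : RootsRainbowCopy G c σ par j₀ (par j) u
    · rcases hu with ⟨next, -, hadj, hnext⟩
      exact ⟨next j, fun _ hj => ⟨hadj j hj rfl, hnext j hj rfl⟩⟩
    · exact ⟨u, fun h => absurd h hu⟩
  choose next hnext using hnext
  -- `walk n j` follows the `n` ancestors of `j` down from `u₀`
  let walk : ℕ → ι → V :=
    fun n => Nat.rec (motive := fun _ => ι → V) (fun _ => u₀) (fun _ w j => next j (w (par j))) n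
  have hroots : ∀ n j, dp j = n → RootsRainbowCopy G c σ par j₀ j (walk n j) := by
    intro n
    induction n with
    | zero =>
      intro j hj
      obtain rfl : j = j₀ := by_contra fun hne => by have := hdp j hne; omega
      exact h₀
    | succ n ih =>
      intro j hj
      have hne : j ≠ j₀ := by rintro rfl; omega
      exact (hnext j _ (ih (par j) (by have := hdp j hne; omega)) hne).2
  refine ⟨fun j => walk (dp j) j, fun j => ?_, fun j hj => ?_⟩
  · obtain ⟨-, hcol, -, -⟩ := hroots (dp j) j rfl
    exact hcol
  · show G.Adj (walk (dp (par j)) (par j)) (walk (dp j) j)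
    rw [← hdp j hj]
    exact (hnext j _ (hroots _ _ rfl) hj).1

end RainbowPattern

section Rooting

variable {W : Type*}

structure IsRooting (T : SimpleGraph W) (root : W) (par : W → W) (dep : W → ℕ) : Prop where
  dep_root : dep root = 0
  dep_par : ∀ y, y ≠ root → dep (par y) + 1 = dep y
  adj_iff : ∀ a b, T.Adj a b ↔ (b ≠ root ∧ a = par b) ∨ (a ≠ root ∧ b = par a)

theorem SimpleGraph.IsTree.exists_isRooting [Fintype W] {T : SimpleGraph W} (hT : T.IsTree)
    (root : W) : ∃ par dep, IsRooting T root par dep ∧ ∀ y, dep y < Fintype.card W := by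
  choose pth hpth huniq using fun y => hT.existsUnique_path y root
  have hnil : pth root = .nil := (huniq root .nil .nil).symm
  have htail : ∀ y, (pth y).tail = pth (pth y).snd := fun y =>
    huniq _ _ (hpth y).tail
  refine ⟨fun y => (pth y).snd, fun y => (pth y).length,
    ⟨by simp [hnil], fun y hy => ?_, fun a b => ⟨fun hab => ?_, ?_⟩⟩,
    fun y => (hpth y).length_lt⟩
  · rw [← htail y, Walk.length_tail_add_one (Walk.not_nil_of_ne hy)]
  · by_cases hb : b ∈ (pth a).support
    · refine .inr ⟨fun ha => ?_, hT.isAcyclic.eq_snd_of_adj_start (hpth a) hab hb⟩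
      subst ha
      simp [hnil, hab.ne'] at hb
    · have hcons : Walk.cons hab.symm (pth a) = pth b :=
        huniq b _ ((Walk.cons_isPath_iff _ _).mpr ⟨hpth a, hb⟩)
      refine .inl ⟨fun hb' => ?_, by rw [← hcons, Walk.snd_cons]⟩
      subst hb'
      simp [hnil] at hcons
  · rintro (⟨hb, rfl⟩ | ⟨ha, rfl⟩)
    · exact (Walk.adj_snd (Walk.not_nil_of_ne hb)).symm
    · exact Walk.adj_snd (Walk.not_nil_of_ne ha)

theorem IsRooting.exists_par_mem [Fintype W] {T : SimpleGraph W} {root : W} {par : W → W}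
    {dep : W → ℕ} (hT : IsRooting T root par dep) {S : Finset W} (hroot : root ∈ S) {x : W}
    (hx : x ∉ S) : ∃ y ∉ S, y ≠ root ∧ par y ∈ S := by
  classical
  obtain ⟨y, hyS, hmin⟩ := exists_min_image (univ \ S) dep ⟨x, mem_sdiff.mpr ⟨mem_univ x, hx⟩⟩
  have hyS : y ∉ S := (mem_sdiff.mp hyS).2
  have hy : y ≠ root := fun h => hyS (h ▸ hroot)
  refine ⟨y, hyS, hy, by_contra fun hpy => ?_⟩
  have := hmin (par y) (mem_sdiff.mpr ⟨mem_univ _, hpy⟩)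
  have := hT.dep_par y hy
  omega

end Rooting

/-- Nodes of the `β`-ary blow-up of a rooted tree of height at most `n`: a vertex `y` with the
branch labels chosen at the `dep y` levels above it, padded with `default`. -/
abbrev BlowUp {W : Type*} (dep : W → ℕ) (n : ℕ) (β : Type*) [Inhabited β] : Type _ :=
  {p : W × (Fin n → β) // ∀ i : Fin n, dep p.1 ≤ i → p.2 i = default}

namespace BlowUp

variable {W β : Type*} [Inhabited β] {dep : W → ℕ} {n : ℕ}

def vertex (j : BlowUp dep n β) : W := j.1.1

def root (r : W) : BlowUp dep n β :=
  ⟨(r, fun _ => default), fun _ _ => rfl⟩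

def parent (par : W → W) (j : BlowUp dep n β) : BlowUp dep n β :=
  ⟨(par j.vertex, fun i => if (i : ℕ) < dep (par j.vertex) then j.1.2 i else default),
    fun _ hi => if_neg (not_lt.mpr hi)⟩

theorem eq_root_of_vertex_eq {r : W} (hr : dep r = 0) {j : BlowUp dep n β} (h : j.vertex = r) :
    j = root r := by
  obtain ⟨⟨y, w⟩, hw⟩ := j
  obtain rfl : y = r := h
  exact Subtype.ext (Prod.ext rfl (funext fun i => hw i (by simp [hr])))

theorem exists_children (par : W → W) (j : BlowUp dep n β) {y : W} (hy : par y = j.vertex)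
    (hdep : dep y = dep j.vertex + 1) (hn : dep y ≤ n) :
    ∃ w : β → BlowUp dep n β, Injective w ∧ ∀ b, (w b).vertex = y ∧ (w b).parent par = j := by
  let k : Fin n := ⟨dep j.vertex, by omega⟩
  have hj : ∀ i : Fin n, dep j.vertex ≤ i → j.1.2 i = default := j.2
  refine ⟨fun b => ⟨(y, update j.1.2 k b), fun i hi => ?_⟩, fun b b' h => ?_, fun b => ⟨rfl, ?_⟩⟩
  · have hik : i ≠ k := fun h => by subst h; simp [k] at hi; omega
    simp only [update_of_ne hik]
    exact hj i (by simp at hi; omega)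
  · simpa using congrArg (fun j : BlowUp dep n β => j.1.2 k) h
  · refine Subtype.ext (Prod.ext hy (funext fun i => ?_))
    show (if (i : ℕ) < dep (par y) then update j.1.2 k b i else default) = j.1.2 i
    rw [hy]
    split_ifs with hi
    · exact update_of_ne (fun h => by simp [h, k] at hi) _ _
    · exact (hj i (not_lt.mp hi)).symm

theorem card_le [Fintype W] [Fintype β] [DecidableEq β] :
    Fintype.card (BlowUp dep n β) ≤ Fintype.card W * Fintype.card β ^ n := by
  simpa using Fintype.card_subtype_le (α := W × (Fin n → β)) _

end BlowUp

section Greedy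

variable {V β : Type*} [Fintype β] {G : SimpleGraph V} {r : ℕ}

theorem K2rFree.card_filter_adj_lt [DecidableRel G.Adj] (hfree : K2rFree G r) {u z : V}
    (huz : u ≠ z) {w : β → V} (hw : Injective w) (hu : ∀ b, G.Adj u (w b)) :
    #{b | G.Adj z (w b)} < r := by
  by_contra! h
  obtain ⟨e⟩ : Nonempty (Fin r ↪ ({b | G.Adj z (w b)} : Finset β)) :=
    Embedding.nonempty_of_card_le (by rwa [Fintype.card_fin, Fintype.card_coe])
  have hz : ∀ i, G.Adj z (w (e i)) := fun i => (mem_filter.mp (e i).2).2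
  exact hfree ⟨u, z, fun i => w (e i), hw.comp (Subtype.val_injective.comp e.injective), huz,
    fun i => ⟨(hu _).ne', (hz i).ne'⟩, fun i => ⟨hu _, hz i⟩⟩

theorem K2rFree.exists_forall_not_adj (hfree : K2rFree G r) {u : V} {Z : Finset V} (huZ : u ∉ Z)
    {w : β → V} (hw : Injective w) (hu : ∀ b, G.Adj u (w b))
    (hZ : #Z * (r - 1) < Fintype.card β) : ∃ b, ∀ z ∈ Z, ¬ G.Adj z (w b) := by
  classical
  have hcount : #(Z.biUnion fun z => {b | G.Adj z (w b)}) < #(univ : Finset β) := by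
    refine lt_of_le_of_lt (card_biUnion_le_card_mul _ _ _ fun z hz => ?_) (by simpa using hZ)
    have := hfree.card_filter_adj_lt (ne_of_mem_of_not_mem hz huZ).symm hw hu
    omega
  obtain ⟨b, -, hb⟩ := exists_mem_notMem_of_card_lt_card hcount
  exact ⟨b, fun z hz hzb => hb (mem_biUnion.mpr ⟨z, hz, by simpa using hzb⟩)⟩

variable {W : Type*} {T : SimpleGraph W} {root : W} {par : W → W} {dep : W → ℕ}

def IsBranching (G : SimpleGraph V) (β : Type*) (root : W) (par : W → W) (A : W → Set V) :
    Prop :=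
  ∀ y, y ≠ root → ∀ u ∈ A (par y), ∃ w : β → V, Injective w ∧ ∀ b, w b ∈ A y ∧ G.Adj u (w b)

theorem IsRooting.adj_insert_iff [DecidableEq W] (hT : IsRooting T root par dep)
    {S : Finset W} {f : W → V} (hclosed : ∀ z ∈ S, z ≠ root → par z ∈ S)
    (hind : ∀ a ∈ S, ∀ b ∈ S, T.Adj a b ↔ G.Adj (f a) (f b))
    {y : W} (hyS : y ∉ S) (hy : y ≠ root) {v : V} (hpar : G.Adj (f (par y)) v)
    (hnot : ∀ z ∈ S, z ≠ par y → ¬ G.Adj (f z) v) :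
    ∀ a ∈ insert y S, ∀ b ∈ insert y S,
      T.Adj a b ↔ G.Adj (update f y v a) (update f y v b) := by
  have hT_y : ∀ z ∈ S, T.Adj y z ↔ z = par y := fun z hz => by
    rw [hT.adj_iff]
    refine ⟨?_, fun h => .inr ⟨hy, h⟩⟩
    rintro (⟨hz', rfl⟩ | ⟨-, h⟩)
    · exact absurd (hclosed z hz hz') hyS
    · exact h
  have hG_y : ∀ z ∈ S, G.Adj v (f z) ↔ z = par y := fun z hz =>
    ⟨fun h => by_contra fun hne => hnot z hz hne h.symm, fun h => h ▸ hpar.symm⟩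
  have hne : ∀ z ∈ S, z ≠ y := fun z hz => ne_of_mem_of_not_mem hz hyS
  intro a ha b hb
  rcases mem_insert.mp ha with rfl | haS <;> rcases mem_insert.mp hb with rfl | hbS
  · simp
  · rw [update_self, update_of_ne (hne b hbS), hT_y b hbS, hG_y b hbS]
  · rw [update_self, update_of_ne (hne a haS), T.adj_comm, G.adj_comm,
      hT_y a haS, hG_y a haS]
  · rw [update_of_ne (hne a haS), update_of_ne (hne b hbS)]
    exact hind a haS b hbS

theorem exists_mem_adj_forall_not_adj [Fintype W] (hfree : K2rFree G r) {A : W → Set V}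
    (hA : Pairwise (Disjoint on A)) (hβ : Fintype.card W * (r - 1) < Fintype.card β)
    (hbranch : IsBranching G β root par A) {S : Finset W} {f : W → V}
    (hfA : ∀ z ∈ S, f z ∈ A z) {y : W} (hy : y ≠ root) (hpy : par y ∈ S) :
    ∃ v ∈ A y, G.Adj (f (par y)) v ∧ ∀ z ∈ S, z ≠ par y → ¬ G.Adj (f z) v := by
  classical
  obtain ⟨w, hw, hwA⟩ := hbranch y hy (f (par y)) (hfA _ hpy)
  have hfresh : f (par y) ∉ (S.erase (par y)).image f := fun h => by
    obtain ⟨z, hz, hfz⟩ := mem_image.mp h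
    exact Set.disjoint_left.mp (hA (ne_of_mem_erase hz)) (hfA z (mem_of_mem_erase hz))
      (hfz ▸ hfA _ hpy)
  have hZ : #((S.erase (par y)).image f) * (r - 1) < Fintype.card β :=
    lt_of_le_of_lt (Nat.mul_le_mul_right _
      (card_image_le.trans (card_erase_le.trans (card_le_univ S)))) hβ
  obtain ⟨b, hb⟩ := hfree.exists_forall_not_adj hfresh hw (fun b => (hwA b).2) hZ
  exact ⟨w b, (hwA b).1, (hwA b).2, fun z hz hzy =>
    hb (f z) (mem_image_of_mem f (mem_erase.mpr ⟨hzy, hz⟩))⟩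

theorem exists_induced_of_branching [Fintype W] (hfree : K2rFree G r)
    (hT : IsRooting T root par dep) {A : W → Set V} (hA : Pairwise (Disjoint on A))
    (hroot : (A root).Nonempty) (hβ : Fintype.card W * (r - 1) < Fintype.card β)
    (hbranch : IsBranching G β root par A) :
    ∃ f : W → V, (∀ y, f y ∈ A y) ∧ ∀ a b, T.Adj a b ↔ G.Adj (f a) (f b) := by
  classical
  suffices h : ∀ n < Fintype.card W, ∃ (S : Finset W) (f : W → V), #S = n + 1 ∧ root ∈ S ∧
      (∀ z ∈ S, z ≠ root → par z ∈ S) ∧ (∀ z ∈ S, f z ∈ A z) ∧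
      ∀ a ∈ S, ∀ b ∈ S, T.Adj a b ↔ G.Adj (f a) (f b) by
    have hW := Fintype.card_pos_iff.mpr ⟨root⟩
    obtain ⟨S, f, hS, -, -, hfA, hind⟩ := h (Fintype.card W - 1) (by omega)
    obtain rfl : S = univ := eq_univ_of_card S (by omega)
    exact ⟨f, fun y => hfA y (mem_univ y), fun a b => hind a (mem_univ a) b (mem_univ b)⟩
  intro n hn
  induction n with
  | zero =>
    obtain ⟨v, hv⟩ := hroot
    exact ⟨{root}, fun _ => v, rfl, mem_singleton_self _, by simp, by simp [hv], by simp⟩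
  | succ n ih =>
    obtain ⟨S, f, hS, hrS, hclosed, hfA, hind⟩ := ih (by omega)
    obtain ⟨x, hx⟩ : ∃ x, x ∉ S := by
      by_contra! h
      rw [eq_univ_of_forall h, card_univ] at hS
      omega
    obtain ⟨y, hyS, hy, hpy⟩ := hT.exists_par_mem hrS hx
    obtain ⟨v, hvA, hpar, hnot⟩ :=
      exists_mem_adj_forall_not_adj hfree hA hβ hbranch hfA hy hpy
    refine ⟨insert y S, update f y v, by rw [card_insert_of_notMem hyS, hS],
      mem_insert_of_mem hrS, fun z hz hzr => ?_, fun z hz => ?_,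
      hT.adj_insert_iff hclosed hind hyS hy hpar hnot⟩
    · rcases mem_insert.mp hz with rfl | hz
      · exact mem_insert_of_mem hpy
      · exact mem_insert_of_mem (hclosed z hz hzr)
    · rcases mem_insert.mp hz with rfl | hz
      · simpa using hvA
      · rw [update_of_ne (ne_of_mem_of_not_mem hz hyS)]
        exact hfA z hz

end Greedy

section Branching

variable {V W : Type*} [Fintype V] {G : SimpleGraph V} {c : V → ℕ}

theorem exists_rainbow_branching_sets (hc : ∀ u v, G.Adj u v → c u ≠ c v)
    (hopt : (#(univ.image c) : ℕ∞) = G.chromaticNumber) [Fintype W] {T : SimpleGraph W}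
    {root : W} {par : W → W} {dep : W → ℕ} (hT : IsRooting T root par dep) {n : ℕ}
    (hn : ∀ y, dep y ≤ n) (β : Type*) [Fintype β] [DecidableEq β] [Inhabited β]
    (hcard : Fintype.card W * Fintype.card β ^ n ≤ #(univ.image c)) :
    ∃ A : W → Set V, (A root).Nonempty ∧ IsBranching G β root par A ∧
      Pairwise (Disjoint on fun y => c '' A y) := by
  obtain ⟨e⟩ : Nonempty (BlowUp dep n β ↪ univ.image c) :=
    Function.Embedding.nonempty_of_card_le (by simpa using BlowUp.card_le.trans hcard)
  have hσ : Injective fun j => (e j : ℕ) := Subtype.val_injective.comp e.injective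
  obtain ⟨u₀, hu₀⟩ := exists_rootsRainbowCopy (par := BlowUp.parent par)
    (j₀ := BlowUp.root root) hc hopt hσ fun j => (e j).2
  have hvertex : ∀ j : BlowUp dep n β, j ≠ .root root → j.vertex ≠ root :=
    fun j hj h => hj (BlowUp.eq_root_of_vertex_eq hT.dep_root h)
  obtain ⟨g, hgc, hgadj⟩ := hu₀.exists_hom (dp := fun j => dep j.vertex) hT.dep_root
    fun j hj => hT.dep_par _ (hvertex j hj)
  have hg : Injective g := fun j j' h => hσ (by simp only [← hgc, h])
  refine ⟨fun y => g '' {j | j.vertex = y}, ⟨g (.root root), .root root, rfl, rfl⟩, ?_,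
    fun a b hab => ?_⟩
  · rintro y hy _ ⟨j, hj, rfl⟩
    obtain ⟨w, hw, hwj⟩ := BlowUp.exists_children par j (y := y) hj.symm
      (by rw [hj, hT.dep_par y hy]) (hn y)
    refine ⟨g ∘ w, hg.comp hw, fun b => ⟨⟨w b, (hwj b).1, rfl⟩, ?_⟩⟩
    have := hgadj (w b) fun h => hy (by rw [← (hwj b).1, h]; rfl)
    rwa [(hwj b).2] at this
  · refine Set.disjoint_left.mpr ?_
    rintro _ ⟨_, ⟨j, rfl, rfl⟩, rfl⟩ ⟨_, ⟨j', rfl, rfl⟩, he⟩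
    simp only [hgc] at he
    exact hab (congrArg BlowUp.vertex (hσ he).symm)

end Branching

/-- If `G` is a `K_{2,r}`-free graph (`r ≥ 2`) with `χ(G) ≥ (rs)^s`, then for every
optimal proper coloring of `G`, every tree on `s` vertices is present in `G` as an
induced rainbow subgraph. -/
theorem stmt12 {V : Type*} [Fintype V] (G : SimpleGraph V) (r s : ℕ) (hr : 2 ≤ r)
    (hfree : K2rFree G r)
    (hchi : (((r * s) ^ s : ℕ) : ℕ∞) ≤ G.chromaticNumber)
    (c : V → ℕ) (hc : ∀ u v, G.Adj u v → c u ≠ c v)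
    (hopt : ((Finset.univ.image c).card : ℕ∞) = G.chromaticNumber)
    (T : SimpleGraph (Fin s)) (hT : T.IsTree) :
    ∃ f : Fin s → V, Function.Injective f ∧
      (∀ a b, T.Adj a b ↔ G.Adj (f a) (f b)) ∧ Function.Injective (c ∘ f) := by
  obtain ⟨root⟩ := hT.connected.nonempty
  have hs : 0 < s := root.pos
  have : NeZero (r * s) := ⟨Nat.mul_ne_zero (by omega) hs.ne'⟩
  obtain ⟨par, dep, hrooting, hdep⟩ := hT.exists_isRooting root
  have hblowup : s * (r * s) ^ (s - 1) ≤ #(univ.image c) :=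
    calc s * (r * s) ^ (s - 1) ≤ r * s * (r * s) ^ (s - 1) := by
          gcongr; exact Nat.le_mul_of_pos_left s (by omega)
      _ = (r * s) ^ s := by rw [← pow_succ', Nat.sub_add_cancel hs]
      _ ≤ #(univ.image c) := by exact_mod_cast hopt ▸ hchi
  obtain ⟨A, hA₀, hbranch, hAc⟩ := exists_rainbow_branching_sets hc hopt hrooting
    (n := s - 1) (fun y => Nat.le_sub_one_of_lt (by simpa using hdep y)) (Fin (r * s))
    (by simpa using hblowup)
  have hβ : s * (r - 1) < r * s := by
    rw [mul_comm r]; exact Nat.mul_lt_mul_of_pos_left (by omega) hs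
  obtain ⟨f, hfA, hf⟩ := exists_induced_of_branching hfree hrooting
    (fun a b hab => (hAc hab).of_image) hA₀ (by simpa using hβ) hbranch
  have hcf : Injective (c ∘ f) := fun a b h => by_contra fun hab =>
    Set.disjoint_left.mp (hAc hab) ⟨f a, hfA a, rfl⟩ ⟨f b, hfA b, h.symm⟩
  exact ⟨f, hcf.of_comp, hf, hcf⟩
end

section
/- Let G be an oriented graph and suppose there is a proper coloring α of G with colors {1,...,k} and a total order on colors such that for every vertex v, the out-neighbourhood of v contains vertices of all colors smaller than α(v) (an out-tree coloring). If G is B_r-free for some r ≥ 2 and k ≥ (r-1)(s-1)s/2 + s, then G contains every out-tree on s vertices as an induced subgraph. -/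
/-- An oriented graph: a directed graph with no loops and no directed 2-cycles. -/
def Oriented {V : Type*} (E : V → V → Prop) : Prop :=
  (∀ v, ¬ E v v) ∧ ∀ u v, E u v → ¬ E v u

/-- `E` is `B_r`-free: it contains no subgraph that is an orientation of `K_{2,r}`
in which one vertex (`u`) has out-degree `r`. -/
def BrFree {V : Type*} (E : V → V → Prop) (r : ℕ) : Prop :=
  ¬ ∃ (u x : V) (w : Fin r → V), Function.Injective w ∧ u ≠ x ∧
      (∀ i, w i ≠ u ∧ w i ≠ x) ∧ ∀ i, E u (w i) ∧ (E x (w i) ∨ E (w i) x)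

/-- The directed graph `E` contains the directed graph `TE` as an induced subgraph. -/
def ContainsInduced {V W : Type*} (E : V → V → Prop) (TE : W → W → Prop) : Prop :=
  ∃ f : W → V, Function.Injective f ∧ ∀ a b, TE a b ↔ E (f a) (f b)

/-- An out-tree: an orientation of a tree with a root from which every vertex is
reachable by a directed path. -/
def IsOutTree {W : Type*} (TE : W → W → Prop) : Prop :=
  Oriented TE ∧ (SimpleGraph.fromRel TE).IsTree ∧
    ∃ root, ∀ w, Relation.ReflTransGen TE root w

/-- An in-tree: an orientation of a tree with a root reachable from every vertex by a
directed path. -/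
def IsInTree {W : Type*} (TE : W → W → Prop) : Prop :=
  Oriented TE ∧ (SimpleGraph.fromRel TE).IsTree ∧
    ∃ root, ∀ w, Relation.ReflTransGen TE w root

/-- An oriented tree: an orientation of a tree. -/
def IsOrientedTree {W : Type*} (TE : W → W → Prop) : Prop :=
  Oriented TE ∧ (SimpleGraph.fromRel TE).IsTree

section Aux
open SimpleGraph Relation

variable {W : Type*} {TE : W → W → Prop}

private lemma dirWalk (hO : Oriented TE) {x y : W}
    (h : Relation.ReflTransGen TE x y) :
    ∃ p : (SimpleGraph.fromRel TE).Walk x y, ∀ d ∈ p.darts, TE d.fst d.snd := by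
  induction h with
  | refl => exact ⟨Walk.nil, by simp⟩
  | tail h1 h2 ih =>
    obtain ⟨p, hp⟩ := ih
    have hadj : (SimpleGraph.fromRel TE).Adj _ _ :=
      (SimpleGraph.fromRel_adj TE _ _).mpr ⟨fun he => hO.1 _ (he ▸ h2), Or.inl h2⟩
    refine ⟨p.concat hadj, ?_⟩
    intro d hd
    rw [SimpleGraph.Walk.darts_concat, List.concat_eq_append, List.mem_append,
      List.mem_singleton] at hd
    rcases hd with hd | hd
    · exact hp d hd
    · subst hd
      exact h2

private lemma dirPath (hO : Oriented TE) {x y : W}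
    (h : Relation.ReflTransGen TE x y) :
    ∃ p : (SimpleGraph.fromRel TE).Walk x y, p.IsPath ∧ ∀ d ∈ p.darts, TE d.fst d.snd := by
  classical
  obtain ⟨p, hp⟩ := dirWalk hO h
  exact ⟨p.bypass, p.bypass_isPath, fun d hd => hp d (p.darts_bypass_subset hd)⟩

private lemma supportRtg {x y : W} (p : (SimpleGraph.fromRel TE).Walk x y)
    (hdir : ∀ d ∈ p.darts, TE d.fst d.snd) :
    ∀ z ∈ p.support, Relation.ReflTransGen TE z y := by
  induction p with
  | nil => intro z hz; rw [SimpleGraph.Walk.support_nil, List.mem_singleton] at hz; subst hz; rfl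
  | @cons a b c h q ih =>
    intro z hz
    rw [SimpleGraph.Walk.support_cons, List.mem_cons] at hz
    have hdir' : ∀ d ∈ q.darts, TE d.fst d.snd := fun d hd =>
      hdir d (by rw [SimpleGraph.Walk.darts_cons]; exact List.mem_cons_of_mem _ hd)
    rcases hz with rfl | hz
    · have hab : TE z b := hdir ⟨(z, b), h⟩
        (by rw [SimpleGraph.Walk.darts_cons]; exact List.mem_cons_self)
      exact Relation.ReflTransGen.head hab (ih hdir' b q.start_mem_support)
    · exact ih hdir' z hz

private lemma noCycle (hO : Oriented TE)
    (hac : (SimpleGraph.fromRel TE).IsAcyclic) {u v : W}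
    (huv : TE u v) (hvu : Relation.ReflTransGen TE v u) : False := by
  obtain ⟨p, hp, hdir⟩ := dirPath hO hvu
  have hadj : (SimpleGraph.fromRel TE).Adj u v :=
    (SimpleGraph.fromRel_adj TE _ _).mpr ⟨fun he => hO.1 _ (he ▸ huv), Or.inl huv⟩
  have hedge : s(u, v) ∉ p.edges := by
    intro he
    rw [SimpleGraph.Walk.edges, List.mem_map] at he
    obtain ⟨d, hd, hde⟩ := he
    rcases SimpleGraph.dart_edge_eq_mk'_iff'.mp hde with ⟨h1, h2⟩ | ⟨h1, h2⟩
    · have hvt : v ∈ p.support.tail := by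
        rw [← SimpleGraph.Walk.map_snd_darts]
        exact List.mem_map.mpr ⟨d, hd, h2⟩
      have := hp.support_nodup
      rw [p.support_eq_cons] at this
      exact (List.nodup_cons.mp this).1 hvt
    · exact hO.2 u v huv (h1 ▸ h2 ▸ hdir d hd)
  have hcyc : (SimpleGraph.Walk.cons hadj p).IsCycle :=
    (SimpleGraph.Walk.cons_isCycle_iff p hadj).mpr ⟨hp, hedge⟩
  exact hac _ hcyc

private lemma extendPath (hO : Oriented TE)
    (hac : (SimpleGraph.fromRel TE).IsAcyclic) {root u v : W}
    (hru : Relation.ReflTransGen TE root u) (huv : TE u v) :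
    ∃ (p : (SimpleGraph.fromRel TE).Walk root u) (hadj : (SimpleGraph.fromRel TE).Adj u v),
      p.IsPath ∧ (p.concat hadj).IsPath := by
  obtain ⟨p, hp, hdir⟩ := dirPath hO hru
  have hadj : (SimpleGraph.fromRel TE).Adj u v :=
    (SimpleGraph.fromRel_adj TE _ _).mpr ⟨fun he => hO.1 _ (he ▸ huv), Or.inl huv⟩
  have hvs : v ∉ p.support := by
    intro hv
    exact noCycle hO hac huv (supportRtg p hdir v hv)
  refine ⟨p, hadj, hp, ?_⟩
  rw [← SimpleGraph.Walk.isPath_reverse_iff, SimpleGraph.Walk.reverse_concat]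
  rw [SimpleGraph.Walk.cons_isPath_iff]
  refine ⟨(SimpleGraph.Walk.isPath_reverse_iff p).mpr hp, ?_⟩
  rw [SimpleGraph.Walk.support_reverse, List.mem_reverse]
  exact hvs

private lemma pathLen (hT : (SimpleGraph.fromRel TE).IsTree) {x y : W}
    (p : (SimpleGraph.fromRel TE).Walk x y) (hp : p.IsPath) :
    p.length = (SimpleGraph.fromRel TE).dist x y := by
  obtain ⟨q, hq, hqlen⟩ := (hT.isConnected x y).exists_path_of_dist
  have : p = q := (hT.existsUnique_path x y).unique hp hq
  rw [this, hqlen]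

private lemma distSucc (hO : Oriented TE)
    (hT : (SimpleGraph.fromRel TE).IsTree) {root u v : W}
    (hru : Relation.ReflTransGen TE root u) (huv : TE u v) :
    (SimpleGraph.fromRel TE).dist root v = (SimpleGraph.fromRel TE).dist root u + 1 := by
  obtain ⟨p, hadj, hp, hcp⟩ := extendPath hO hT.IsAcyclic hru huv
  have h1 := pathLen hT _ hcp
  rw [SimpleGraph.Walk.length_concat, pathLen hT p hp] at h1
  omega

private lemma parentUnique (hO : Oriented TE)
    (hT : (SimpleGraph.fromRel TE).IsTree) {root u u' v : W}
    (hru : Relation.ReflTransGen TE root u) (hru' : Relation.ReflTransGen TE root u')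
    (huv : TE u v) (huv' : TE u' v) : u = u' := by
  obtain ⟨p, hadj, hp, hcp⟩ := extendPath hO hT.IsAcyclic hru huv
  obtain ⟨p', hadj', hp', hcp'⟩ := extendPath hO hT.IsAcyclic hru' huv'
  have heq : p.concat hadj = p'.concat hadj' := (hT.existsUnique_path root v).unique hcp hcp'
  have hdeq : (⟨(u, v), hadj⟩ : (SimpleGraph.fromRel TE).Dart)
      = (⟨(u', v), hadj'⟩ : (SimpleGraph.fromRel TE).Dart) := by
    have h1 : (p.darts ++ [(⟨(u, v), hadj⟩ : (SimpleGraph.fromRel TE).Dart)]).getLast?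
        = some ⟨(u, v), hadj⟩ := List.getLast?_concat
    have h2 : (p'.darts ++ [(⟨(u', v), hadj'⟩ : (SimpleGraph.fromRel TE).Dart)]).getLast?
        = some ⟨(u', v), hadj'⟩ := List.getLast?_concat
    have h3 := congrArg (fun q => q.darts.getLast?) heq
    simp only [SimpleGraph.Walk.darts_concat, List.concat_eq_append] at h3
    rw [h1, h2] at h3
    exact Option.some.inj h3
  have := (SimpleGraph.Dart.ext_iff _ _).mp hdeq
  exact congrArg Prod.fst this

private lemma brfree_card {V : Type*} [Fintype V] [DecidableEq V] {E : V → V → Prop} {r : ℕ}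
    (hfree : BrFree E r) (u x : V) (hux : u ≠ x)
    [DecidablePred (fun w => E u w ∧ (E x w ∨ E w x) ∧ w ≠ u ∧ w ≠ x)] :
    (Finset.univ.filter (fun w => E u w ∧ (E x w ∨ E w x) ∧ w ≠ u ∧ w ≠ x)).card ≤ r - 1 := by
  set F := Finset.univ.filter (fun w => E u w ∧ (E x w ∨ E w x) ∧ w ≠ u ∧ w ≠ x) with hF
  by_contra hcard
  have hr : r ≤ F.card := by omega
  obtain ⟨S, hS, hScard⟩ := Finset.exists_subset_card_eq hr
  have e : Fin r ≃ S := (S.equivFin.trans (finCongr hScard)).symm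
  refine hfree ⟨u, x, fun i => (e i : V), ?_, hux, ?_, ?_⟩
  · intro i j hij
    exact e.injective (Subtype.coe_injective hij)
  · intro i
    have := Finset.mem_filter.mp (hS (e i).2)
    exact ⟨this.2.2.2.1, this.2.2.2.2⟩
  · intro i
    have := Finset.mem_filter.mp (hS (e i).2)
    exact ⟨this.2.1, this.2.2.1⟩

end Aux

/-- If a `B_r`-free oriented graph (`r ≥ 2`) has a proper coloring `α` with colors
`{1, …, k}` such that for every vertex `v`, the out-neighbourhood of `v` contains
vertices of all colors smaller than `α v` (an out-tree coloring), and
`k ≥ (r-1)(s-1)s/2 + s`, then `G` contains every out-tree on `s` vertices as an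
induced subgraph. -/
theorem stmt13 {V : Type*} [Fintype V] (E : V → V → Prop) (hE : Oriented E)
    (r s k : ℕ) (hr : 2 ≤ r) (hfree : BrFree E r)
    (α : V → ℕ)
    (hproper : ∀ u v, E u v ∨ E v u → α u ≠ α v)
    (hrange : ∀ v, α v ∈ Finset.Icc 1 k)
    (hsurj : ∀ i ∈ Finset.Icc 1 k, ∃ v, α v = i)
    (houttree : ∀ v, ∀ i, 1 ≤ i → i < α v → ∃ w, E v w ∧ α w = i)
    (hk : (r - 1) * (s - 1) * s / 2 + s ≤ k)
    (TE : Fin s → Fin s → Prop) (hT : IsOutTree TE) :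
    ContainsInduced E TE := by
  classical
  obtain ⟨R, rfl⟩ : ∃ R, r = R + 2 := ⟨r - 2, by omega⟩
  obtain ⟨hO, hTree, root, hroot⟩ := hT
  rcases Nat.eq_zero_or_pos s with hs0 | hs0
  · subst hs0
    exact ⟨Fin.elim0, fun a => a.elim0, fun a => a.elim0⟩
  -- arithmetic consequence of `hk` without division
  have hk2 : (R + 1) * ((s - 1) * s) + 2 * s ≤ 2 * k := by
    have h1 : R + 2 - 1 = R + 1 := rfl
    have heven : Even ((s - 1) * s) := by
      have : (s - 1) + 1 = s := by omega
      rw [← this]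
      exact Nat.even_mul_succ_self (s - 1)
    have heven' : Even ((R + 1) * ((s - 1) * s)) := heven.mul_left (R + 1)
    have hdiv : (R + 2 - 1) * (s - 1) * s / 2 = (R + 1) * ((s - 1) * s) / 2 := by
      rw [h1, mul_assoc]
    rw [hdiv] at hk
    have h2 : (R + 1) * ((s - 1) * s) / 2 * 2 = (R + 1) * ((s - 1) * s) :=
      Nat.div_two_mul_two_of_even heven'
    omega
  have hsk : s ≤ k := le_trans (Nat.le_add_left s _) hk
  set D : Fin s → ℕ := fun x => (SimpleGraph.fromRel TE).dist root x with hD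
  set σ : Equiv.Perm (Fin s) := Tuple.sort D with hσdef
  have hmono : Monotone (D ∘ σ) := Tuple.monotone_sort D
  have hdsucc : ∀ u v : Fin s, TE u v → D v = D u + 1 := fun u v h =>
    distSucc hO hTree (hroot u) h
  have horder : ∀ i j : Fin s, TE (σ i) (σ j) → i < j := by
    intro i j h
    have h1 := hdsucc _ _ h
    by_contra hij
    push_neg at hij
    have h2 := hmono hij
    simp only [Function.comp_apply] at h2
    omega
  have hroot0 : σ ⟨0, hs0⟩ = root := by
    have hle : (⟨0, hs0⟩ : Fin s) ≤ σ.symm root := by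
      simp [Fin.le_def]
    have h1 := hmono hle
    simp only [Function.comp_apply, Equiv.apply_symm_apply] at h1
    have h2 : D root = 0 := by simp [hD]
    have h3 : D (σ ⟨0, hs0⟩) = 0 := by omega
    have := (hTree.isConnected.dist_eq_zero_iff).mp h3
    exact this.symm
  have hparent : ∀ j : Fin s, σ j ≠ root → ∃ i : Fin s, i < j ∧ TE (σ i) (σ j) := by
    intro j hne
    rcases (hroot (σ j)).cases_tail with heq | ⟨c, hc, hTEc⟩
    · exact absurd heq hne
    · refine ⟨σ.symm c, ?_, ?_⟩
      · apply horder
        rw [Equiv.apply_symm_apply]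
        exact hTEc
      · rw [Equiv.apply_symm_apply]
        exact hTEc
  have huniq : ∀ (u u' v : Fin s), TE u v → TE u' v → u = u' := fun u u' v h h' =>
    parentUnique hO hTree (hroot u) (hroot u') h h'
  -- the main embedding, built step by step
  have key : ∀ n, ∀ hn : n ≤ s, ∃ g : ∀ a : ℕ, a < n → V,
      (∀ a b (ha : a < n) (hb : b < n),
        (TE (σ ⟨a, lt_of_lt_of_le ha hn⟩) (σ ⟨b, lt_of_lt_of_le hb hn⟩) ↔ E (g a ha) (g b hb))) ∧
      (∀ a b (ha : a < n) (hb : b < n), a < b → α (g b hb) < α (g a ha)) ∧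
      (∀ a (ha : a < n), 2 * k ≤ 2 * α (g a ha) + 2 * a + (R + 1) * (a * (a + 1))) := by
    intro n
    induction n with
    | zero =>
      intro hn
      exact ⟨fun a ha => absurd ha (Nat.not_lt_zero a),
        fun a b ha => absurd ha (Nat.not_lt_zero a),
        fun a b ha => absurd ha (Nat.not_lt_zero a),
        fun a ha => absurd ha (Nat.not_lt_zero a)⟩
    | succ n ih =>
      intro hn
      by_cases hn0 : n = 0
      · subst hn0
        obtain ⟨v0, hv0⟩ := hsurj k (Finset.mem_Icc.mpr ⟨by omega, le_refl k⟩)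
        refine ⟨fun _ _ => v0, ?_, ?_, ?_⟩
        · intro a b ha hb
          have ha0 : a = 0 := by omega
          have hb0 : b = 0 := by omega
          subst ha0; subst hb0
          exact iff_of_false (hO.1 _) (hE.1 v0)
        · intro a b ha hb hab
          omega
        · intro a ha
          have ha0 : a = 0 := by omega
          subst ha0
          simp [hv0]
      · obtain ⟨gP, hA, hB, hC⟩ := ih (by omega)
        obtain ⟨N, rfl⟩ : ∃ N, n = N + 1 := ⟨n - 1, by omega⟩
        -- injectivity of the partial embedding
        have hgne : ∀ a b (ha : a < N + 1) (hb : b < N + 1), a ≠ b → gP a ha ≠ gP b hb := by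
          intro a b ha hb hab he
          rcases Nat.lt_or_ge a b with h | h
          · exact (hB a b ha hb h).ne' (congrArg α he)
          · exact (hB b a hb ha (by omega)).ne' (congrArg α he.symm)
        set jF : Fin s := ⟨N + 1, by omega⟩ with hjF
        have hjroot : σ jF ≠ root := by
          intro h
          rw [← hroot0] at h
          have := σ.injective h
          rw [Fin.ext_iff] at this
          simp at this
        obtain ⟨pF, hpj, hTEp⟩ := hparent jF hjroot
        have hpn : (pF : ℕ) < N + 1 := hpj
        set vp : V := gP pF.val hpn with hvp
        set prev : V := gP N (by omega) with hprevdef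
        have hprevle : ∀ a (ha : a < N + 1), α prev ≤ α (gP a ha) := by
          intro a ha
          rcases Nat.lt_or_ge a N with h | h
          · exact le_of_lt (hB a N ha (by omega) h)
          · have haN : a = N := by omega
            subst haN
            exact le_refl _
        have hCprev : 2 * k ≤ 2 * α prev + 2 * N + (R + 1) * (N * (N + 1)) := hC N (by omega)
        have hsN : N + 2 ≤ s := by omega
        have hprev_big : (N + 1) * (R + 1) + 2 ≤ α prev := by
          obtain ⟨M, rfl⟩ : ∃ M, s = N + 2 + M := ⟨s - (N + 2), by omega⟩
          have hsub : N + 2 + M - 1 = N + 1 + M := by omega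
          rw [hsub] at hk2
          have e2 : (R + 1) * ((N + 1 + M) * (N + 2 + M))
              = (R + 1) * (N * (N + 1)) + 2 * ((N + 1) * (R + 1))
                + (R + 1) * (M * (2 * N + 3) + M * M) := by ring
          rw [e2] at hk2
          linarith [hCprev, hk2, Nat.zero_le ((R + 1) * (M * (2 * N + 3) + M * M))]
        -- bad color set
        set BC : Finset ℕ := (Finset.range (N + 1)).biUnion (fun a =>
          if h : a < N + 1 then
            (if a = pF.val then (∅ : Finset ℕ) else
              (Finset.univ.filter (fun w => E vp w ∧ (E (gP a h) w ∨ E w (gP a h)) ∧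
                w ≠ vp ∧ w ≠ gP a h)).image α)
          else ∅) with hBCdef
        have hBCcard : BC.card ≤ (N + 1) * (R + 1) := by
          refine le_trans (Finset.card_biUnion_le_card_mul _ _ (R + 1) ?_) ?_
          · intro a ha
            rw [Finset.mem_range] at ha
            rw [dif_pos ha]
            by_cases hap : a = pF.val
            · rw [if_pos hap]; simp
            · rw [if_neg hap]
              refine le_trans Finset.card_image_le ?_
              have hne : vp ≠ gP a ha := hgne pF.val a hpn ha (fun h => hap h.symm)
              have hbr := brfree_card hfree vp (gP a ha) hne
              simpa using hbr
          · simp [Finset.card_range]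
        set I : Finset ℕ := Finset.Icc (α prev - ((N + 1) * (R + 1) + 1)) (α prev - 1) with hIdef
        have hIcard : I.card = (N + 1) * (R + 1) + 1 := by
          rw [hIdef, Nat.card_Icc]
          omega
        obtain ⟨c, hcI, hcBC⟩ : ∃ c, c ∈ I ∧ c ∉ BC := by
          by_contra hcon
          push_neg at hcon
          have := Finset.card_le_card (fun c hc => hcon c hc)
          omega
        rw [hIdef, Finset.mem_Icc] at hcI
        have hc1 : 1 ≤ c := by omega
        have hcprev : c < α prev := by omega
        have hcvp : c < α vp := lt_of_lt_of_le hcprev (hprevle pF.val hpn)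
        obtain ⟨w, hEw, hαw⟩ := houttree vp c hc1 hcvp
        have hwlt : ∀ a (ha : a < N + 1), α w < α (gP a ha) := by
          intro a ha
          rw [hαw]
          exact lt_of_lt_of_le hcprev (hprevle a ha)
        have hwne : ∀ a (ha : a < N + 1), w ≠ gP a ha := by
          intro a ha he
          exact absurd (congrArg α he) (hwlt a ha).ne
        have hnadj : ∀ a (ha : a < N + 1), a ≠ pF.val →
            ¬ (E (gP a ha) w ∨ E w (gP a ha)) := by
          intro a ha hap hor
          apply hcBC
          rw [hBCdef]
          apply Finset.mem_biUnion.mpr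
          refine ⟨a, Finset.mem_range.mpr ha, ?_⟩
          rw [dif_pos ha, if_neg hap]
          exact Finset.mem_image.mpr ⟨w, Finset.mem_filter.mpr
            ⟨Finset.mem_univ w, hEw, hor, hwne pF.val hpn, hwne a ha⟩, hαw⟩
        refine ⟨fun a ha => if h : a < N + 1 then gP a h else w, ?_, ?_, ?_⟩
        · -- induced subgraph property
          intro a b ha hb
          by_cases ha' : a < N + 1 <;> by_cases hb' : b < N + 1
          · simp only [dif_pos ha', dif_pos hb']
            exact hA a b ha' hb'
          · have hbN : b = N + 1 := by omega
            subst hbN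
            simp only [dif_pos ha', dif_neg hb']
            by_cases hap : a = pF.val
            · subst hap
              have h1 : (⟨pF.val, lt_of_lt_of_le ha hn⟩ : Fin s) = pF := Fin.eta pF _
              rw [h1]
              exact iff_of_true hTEp hEw
            · constructor
              · intro hTEa
                exfalso
                have := huniq _ _ _ hTEa hTEp
                have := σ.injective this
                rw [Fin.ext_iff] at this
                exact hap this
              · intro hEa
                exact absurd (Or.inl hEa) (hnadj a ha' hap)
          · have haN : a = N + 1 := by omega
            subst haN
            simp only [dif_neg ha', dif_pos hb']
            constructor
            · intro hTEa
              exfalso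
              have := horder jF ⟨b, lt_of_lt_of_le hb hn⟩ hTEa
              rw [Fin.lt_def] at this
              simp only [hjF] at this
              omega
            · intro hEa
              exfalso
              by_cases hbp : b = pF.val
              · subst hbp
                exact hE.2 vp w hEw hEa
              · exact (hnadj b hb' hbp) (Or.inr hEa)
          · have haN : a = N + 1 := by omega
            have hbN : b = N + 1 := by omega
            subst haN; subst hbN
            simp only [dif_neg ha', dif_neg hb']
            exact iff_of_false (hO.1 _) (hE.1 w)
        · -- strictly decreasing colors
          intro a b ha hb hab
          by_cases hb' : b < N + 1
          · have ha' : a < N + 1 := by omega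
            simp only [dif_pos ha', dif_pos hb']
            exact hB a b ha' hb' hab
          · have ha' : a < N + 1 := by omega
            simp only [dif_pos ha', dif_neg hb']
            exact hwlt a ha'
        · -- invariant
          intro a ha
          by_cases ha' : a < N + 1
          · simp only [dif_pos ha']
            exact hC a ha'
          · have haN : a = N + 1 := by omega
            subst haN
            simp only [dif_neg ha']
            rw [hαw]
            have hring : (R + 1) * ((N + 1) * (N + 1 + 1))
                = (R + 1) * (N * (N + 1)) + 2 * ((N + 1) * (R + 1)) := by ring
            have hclow : α prev ≤ c + ((N + 1) * (R + 1) + 1) := by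
              have := hcI.1
              omega
            linarith [hCprev, hclow, hring]
  obtain ⟨g, hA, hB, hC⟩ := key s (le_refl s)
  have hgne : ∀ a b : Fin s, a ≠ b → g a.val a.isLt ≠ g b.val b.isLt := by
    intro a b hab he
    have hv : a.val ≠ b.val := fun hv => hab (Fin.ext hv)
    rcases Nat.lt_or_ge a.val b.val with h | h
    · exact (hB a.val b.val a.isLt b.isLt h).ne' (congrArg α he)
    · have h' : b.val < a.val := by omega
      exact (hB b.val a.val b.isLt a.isLt h').ne' (congrArg α he.symm)
  refine ⟨fun a => g (σ.symm a).val (σ.symm a).isLt, ?_, ?_⟩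
  · intro a b hab
    by_contra hne
    have : σ.symm a ≠ σ.symm b := fun h => hne (σ.symm.injective h)
    exact hgne _ _ this hab
  · intro a b
    have h := hA (σ.symm a).val (σ.symm b).val (σ.symm a).isLt (σ.symm b).isLt
    have h1 : (⟨(σ.symm a).val, lt_of_lt_of_le (σ.symm a).isLt (le_refl s)⟩ : Fin s)
        = σ.symm a := Fin.eta _ _
    have h2 : (⟨(σ.symm b).val, lt_of_lt_of_le (σ.symm b).isLt (le_refl s)⟩ : Fin s)
        = σ.symm b := Fin.eta _ _
    rw [h1, h2, Equiv.apply_symm_apply, Equiv.apply_symm_apply] at h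
    exact h
end

section
/- Let G be a properly colored K_{2,r}-free undirected graph (r ≥ 2) with χ(G) ≥ (r-1)(s-1)s/2 + s. Then G contains an induced rainbow path on s vertices. -/
open Finset

theorem K2rFree.card_neighborFinset_inter_le {V : Type*} [Fintype V] {G : SimpleGraph V}
    [DecidableRel G.Adj] [DecidableEq V] {r : ℕ} (hfree : K2rFree G r) {a b : V} (hab : a ≠ b) :
    #(G.neighborFinset a ∩ G.neighborFinset b) ≤ r - 1 := by
  by_contra! h
  set S := G.neighborFinset a ∩ G.neighborFinset b
  have hr : r ≤ #S := by omega
  let w : Fin r → V := fun i => S.equivFin.symm (Fin.castLE hr i)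
  have hw : ∀ i, G.Adj a (w i) ∧ G.Adj b (w i) := fun i => by
    have hmem := (S.equivFin.symm (Fin.castLE hr i)).2
    simp only [S, mem_inter, SimpleGraph.mem_neighborFinset] at hmem
    exact hmem
  exact hfree ⟨a, b, w,
    Subtype.val_injective.comp (S.equivFin.symm.injective.comp (Fin.castLE_injective hr)), hab,
    fun i => ⟨(hw i).1.ne', (hw i).2.ne'⟩, hw⟩

namespace SimpleGraph

variable {V α : Type*} [LinearOrder α] (G : SimpleGraph V)

theorem colorable_succ_of_card_adj_lt_le [Fintype V] [DecidableRel G.Adj] (c : V → α)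
    (hc : ∀ u v, G.Adj u v → c u ≠ c v) (D : ℕ) (hD : ∀ v, #{w | G.Adj v w ∧ c v < c w} ≤ D) :
    G.Colorable (D + 1) := by
  classical
  suffices ∀ s : Finset V, ∃ σ : V → Fin (D + 1), ∀ u ∈ s, ∀ w ∈ s, G.Adj u w → σ u ≠ σ w by
    obtain ⟨σ, hσ⟩ := this univ
    exact ⟨Coloring.mk σ fun h => hσ _ (mem_univ _) _ (mem_univ _) h⟩
  intro s
  refine Finset.induction_on_min_value c s ⟨0, by simp⟩ fun a s ha hmin ⟨σ, hσ⟩ => ?_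
  have hused : #({w ∈ s | G.Adj a w}.image σ) < #(univ : Finset (Fin (D + 1))) := calc
    _ ≤ #{w ∈ s | G.Adj a w} := card_image_le
    _ ≤ #{w | G.Adj a w ∧ c a < c w} := card_le_card fun w hw => by
      simp only [mem_filter, mem_univ, true_and] at hw ⊢
      exact ⟨hw.2, (hmin w hw.1).lt_of_ne (hc a w hw.2)⟩
    _ < _ := by simpa using Nat.lt_succ_of_le (hD a)
  obtain ⟨x, -, hx⟩ := exists_mem_notMem_of_card_lt_card hused
  have hfresh : ∀ w ∈ s, G.Adj a w → x ≠ σ w := fun w hw hadj h =>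
    hx (mem_image.2 ⟨w, mem_filter.2 ⟨hw, hadj⟩, h.symm⟩)
  have hne : ∀ y ∈ s, y ≠ a := fun y hy => ne_of_mem_of_not_mem hy ha
  refine ⟨Function.update σ a x, fun u hu w hw huw => ?_⟩
  rcases mem_insert.1 hu with rfl | hu' <;> rcases mem_insert.1 hw with rfl | hw'
  · exact (G.irrefl huw).elim
  · simpa [hne w hw'] using hfresh w hw' huw
  · simpa [hne u hu'] using (hfresh u hu' huw.symm).symm
  · simpa [hne u hu', hne w hw'] using hσ u hu' w hw' huw

theorem colorable_sum_of_colorable_induce_fiber (ψ : V → ℕ) {n : ℕ} (hψ : ∀ v, ψ v < n)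
    (k : ℕ → ℕ) (hk : ∀ t < n, (G.induce {v | ψ v = t}).Colorable (k t)) :
    G.Colorable (∑ t ∈ range n, k t) := by
  classical
  let σ : ℕ → V → ℕ := fun t v => if h : ψ v = t then (hk t (h ▸ hψ v)).some ⟨v, h⟩ else 0
  have hσ_lt : ∀ v, σ (ψ v) v < k (ψ v) := fun v => by simp [σ]
  have hσ_ne : ∀ u w, ψ u = ψ w → G.Adj u w → σ (ψ u) u ≠ σ (ψ w) w := fun u w h huw => by
    rw [h]
    simp only [σ, dif_pos h, dif_pos rfl]
    exact fun heq => Coloring.valid _ (by simpa using huw) (Fin.ext heq)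
  let S : Finset (Σ _ : ℕ, ℕ) := (range n).sigma fun t => range (k t)
  let C : G.Coloring S := Coloring.mk (fun v => ⟨⟨ψ v, σ (ψ v) v⟩, by simp [S, hψ v, hσ_lt v]⟩)
    fun {u w} huw h => by
      simp only [Subtype.mk.injEq, Sigma.mk.injEq, heq_eq_eq] at h
      exact hσ_ne u w h.1 huw h.2
  simpa [S] using C.colorable

def IsIncreasingInducedPath (c : V → α) {n : ℕ} (g : Fin n → V) : Prop :=
  (∀ i j, G.Adj (g i) (g j) ↔ (i.val + 1 = j.val ∨ j.val + 1 = i.val)) ∧ StrictMono (c ∘ g)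

variable {G} {c : V → α}

theorem isIncreasingInducedPath_const (v : V) :
    G.IsIncreasingInducedPath c (fun _ : Fin 1 => v) :=
  ⟨fun i j => by simp [Fin.fin_one_eq_zero i, Fin.fin_one_eq_zero j], Subsingleton.strictMono _⟩

namespace IsIncreasingInducedPath

variable {n : ℕ} {g : Fin n → V}

theorem injective (hg : G.IsIncreasingInducedPath c g) : Function.Injective g :=
  hg.2.injective.of_comp

theorem comp_castLE (hg : G.IsIncreasingInducedPath c g) {m : ℕ} (h : m ≤ n) :
    G.IsIncreasingInducedPath c (g ∘ Fin.castLE h) :=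
  ⟨fun i j => by simpa using hg.1 (Fin.castLE h i) (Fin.castLE h j),
    hg.2.comp (Fin.strictMono_castLE h)⟩

theorem snoc {g : Fin (n + 1) → V} (hg : G.IsIncreasingInducedPath c g) {v : V}
    (hadj : G.Adj (g (Fin.last n)) v) (hlt : c (g (Fin.last n)) < c v)
    (hnadj : ∀ i : Fin n, ¬ G.Adj (g i.castSucc) v) :
    G.IsIncreasingInducedPath c (Fin.snoc g v : Fin (n + 2) → V) := by
  have hadj_iff : ∀ i : Fin (n + 1), G.Adj (g i) v ↔ i = Fin.last n := fun i => by
    induction i using Fin.lastCases with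
    | last => simpa using hadj
    | cast i => simpa [(Fin.castSucc_lt_last i).ne] using hnadj i
  refine ⟨fun i j => ?_, Fin.strictMono_iff_lt_succ.2 fun i => ?_⟩
  · induction i using Fin.lastCases <;> induction j using Fin.lastCases
    · simp
    · rw [G.adj_comm]
      simp only [Fin.snoc_last, Fin.snoc_castSucc, hadj_iff, Fin.ext_iff, Fin.val_last,
        Fin.val_castSucc]
      omega
    · simp only [Fin.snoc_last, Fin.snoc_castSucc, hadj_iff, Fin.ext_iff, Fin.val_last,
        Fin.val_castSucc]
      omega
    · simpa using hg.1 _ _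
  · induction i using Fin.lastCases with
    | last => simpa using hlt
    | cast i =>
      rw [Function.comp_apply, Function.comp_apply, Fin.succ_castSucc, Fin.snoc_castSucc,
        Fin.snoc_castSucc]
      exact hg.2 Fin.castSucc_lt_succ

end IsIncreasingInducedPath

variable (G c)

open Classical in
noncomputable def pathHeight (s : ℕ) (v : V) : ℕ :=
  Nat.findGreatest
    (fun m => ∃ g : Fin (m + 1) → V, G.IsIncreasingInducedPath c g ∧ g (Fin.last m) = v) s

theorem exists_isIncreasingInducedPath_pathHeight (s : ℕ) (v : V) :
    ∃ g : Fin (G.pathHeight c s v + 1) → V,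
      G.IsIncreasingInducedPath c g ∧ g (Fin.last _) = v := by
  classical
  exact Nat.findGreatest_spec (P := fun m => ∃ g : Fin (m + 1) → V,
    G.IsIncreasingInducedPath c g ∧ g (Fin.last m) = v) (Nat.zero_le s)
    ⟨_, isIncreasingInducedPath_const v, rfl⟩

variable {G c} {s : ℕ}

theorem le_pathHeight {m : ℕ} {g : Fin (m + 1) → V} (hg : G.IsIncreasingInducedPath c g)
    (hm : m ≤ s) : m ≤ G.pathHeight c s (g (Fin.last m)) := by
  classical
  exact Nat.le_findGreatest hm ⟨g, hg, rfl⟩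

theorem card_adj_lt_pathHeight_eq_le [Fintype V] [DecidableRel G.Adj] {r : ℕ}
    (hfree : K2rFree G r) {v : V} (hv : G.pathHeight c s v < s) :
    #{w | G.Adj v w ∧ c v < c w ∧ G.pathHeight c s w = G.pathHeight c s v} ≤
      (r - 1) * G.pathHeight c s v := by
  classical
  obtain ⟨g, hg, hgv⟩ := G.exists_isIncreasingInducedPath_pathHeight c s v
  have hsub : ({w | G.Adj v w ∧ c v < c w ∧ G.pathHeight c s w = G.pathHeight c s v} : Finset V)
      ⊆ univ.biUnion fun i : Fin (G.pathHeight c s v) =>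
        G.neighborFinset (g i.castSucc) ∩ G.neighborFinset v := by
    intro w hw
    simp only [mem_filter, mem_univ, true_and] at hw
    obtain ⟨hvw, hcw, hw⟩ := hw
    by_contra hnot
    have hnadj : ∀ i, ¬ G.Adj (g (Fin.castSucc i)) w := fun i hi =>
      hnot (mem_biUnion.2 ⟨i, mem_univ _, by simp [hi, hvw]⟩)
    have := le_pathHeight (hg.snoc (by rwa [hgv]) (by rwa [hgv]) hnadj) hv
    rw [Fin.snoc_last] at this
    omega
  calc _ ≤ _ := card_le_card hsub
    _ ≤ #(univ : Finset (Fin (G.pathHeight c s v))) * (r - 1) :=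
      card_biUnion_le_card_mul _ _ _ fun i _ => hfree.card_neighborFinset_inter_le
        ((hg.injective.ne (Fin.castSucc_lt_last i).ne).trans_eq hgv)
    _ = _ := by simp [mul_comm]

theorem colorable_induce_pathHeight_eq [Fintype V] {r : ℕ} (hfree : K2rFree G r)
    (hc : ∀ u v, G.Adj u v → c u ≠ c v) {t : ℕ} (ht : t < s) :
    (G.induce {v | G.pathHeight c s v = t}).Colorable ((r - 1) * t + 1) := by
  classical
  refine colorable_succ_of_card_adj_lt_le _ (c ∘ Subtype.val) (fun u w h => hc u.1 w.1 h) _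
    fun v => ?_
  have hv : G.pathHeight c s v = t := v.2
  calc _ ≤ #{w | G.Adj v w ∧ c v < c w ∧ G.pathHeight c s w = G.pathHeight c s v} :=
        card_le_card_of_injOn Subtype.val (fun w hw => by
          have hw' : G.pathHeight c s w = t := w.2
          simp_all) Subtype.val_injective.injOn
    _ ≤ (r - 1) * G.pathHeight c s v := card_adj_lt_pathHeight_eq_le hfree (by omega)
    _ = _ := by rw [hv]

end SimpleGraph

theorem sum_range_mul_add_one_lt (a n : ℕ) :
    ∑ t ∈ range n, (a * t + 1) < a * n * (n + 1) / 2 + (n + 1) := by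
  have hsum : ∑ t ∈ range n, (a * t + 1) = a * ∑ t ∈ range n, t + n := by
    simp [sum_add_distrib, mul_sum]
  have hgauss : a * ∑ t ∈ range n, t ≤ a * n * (n + 1) / 2 := by
    rw [Nat.le_div_iff_mul_le two_pos, mul_assoc, sum_range_id_mul_two, mul_assoc]
    exact Nat.mul_le_mul_left a (Nat.mul_le_mul_left n (by omega))
  omega

theorem stmt15_general {V : Type*} [Fintype V] (G : SimpleGraph V) (r s : ℕ)
    (hfree : K2rFree G r)
    (hchi : (((r - 1) * (s - 1) * s / 2 + s : ℕ) : ℕ∞) ≤ G.chromaticNumber)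
    (c : V → ℕ) (hc : ∀ u v, G.Adj u v → c u ≠ c v) :
    ∃ f : Fin s → V, Function.Injective f ∧
      (∀ i j : Fin s, G.Adj (f i) (f j) ↔ (i.val + 1 = j.val ∨ j.val + 1 = i.val)) ∧
      Function.Injective (c ∘ f) := by
  rcases Nat.eq_zero_or_pos s with rfl | hs
  · exact ⟨Fin.elim0, fun i => i.elim0, fun i => i.elim0, fun i => i.elim0⟩
  by_contra hno
  have hheight : ∀ v, G.pathHeight c s v < s - 1 := fun v => by
    by_contra! h
    obtain ⟨g, hg, -⟩ := G.exists_isIncreasingInducedPath_pathHeight c s v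
    have hpre := hg.comp_castLE (show s ≤ _ by omega)
    exact hno ⟨_, hpre.injective, hpre.1, hpre.2.injective⟩
  have hcol := G.colorable_sum_of_colorable_induce_fiber _ hheight (fun t => (r - 1) * t + 1)
    fun t ht => G.colorable_induce_pathHeight_eq hfree hc (by omega)
  have hle : (r - 1) * (s - 1) * s / 2 + s ≤ ∑ t ∈ range (s - 1), ((r - 1) * t + 1) := by
    exact_mod_cast hchi.trans hcol.chromaticNumber_le
  have hlt := sum_range_mul_add_one_lt (r - 1) (s - 1)
  rw [Nat.sub_add_cancel hs] at hlt
  omega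

/-- Every properly colored `K_{2,r}`-free graph (`r ≥ 2`) with
`χ(G) ≥ (r-1)(s-1)s/2 + s` contains an induced rainbow path on `s` vertices. -/
theorem stmt15 {V : Type*} [Fintype V] (G : SimpleGraph V) (r s : ℕ) (hr : 2 ≤ r)
    (hfree : K2rFree G r)
    (hchi : (((r - 1) * (s - 1) * s / 2 + s : ℕ) : ℕ∞) ≤ G.chromaticNumber)
    (c : V → ℕ) (hc : ∀ u v, G.Adj u v → c u ≠ c v) :
    ∃ f : Fin s → V, Function.Injective f ∧
      (∀ i j : Fin s, G.Adj (f i) (f j) ↔ (i.val + 1 = j.val ∨ j.val + 1 = i.val)) ∧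
      Function.Injective (c ∘ f) :=
  stmt15_general G r s hfree hchi c hc
end
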